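/- arXiv:2005.09838 — 7 statements merged into one kernel-verified Lean document; each statement's English description precedes it below -/
import Mathlib

section
/- Let m1, m2, m3, r be positive integers, let X_1, …, X_{m3} be real m1×r matrices, Y_1, …, Y_{m3} be real r×m2 matrices, and W_1, …, W_{m3} be real m1×m2 matrices. Define Z_k = Σ_{l=1}^{m3} X_{((k−l) mod m3)+1} Y_l for k ∈ {1,…,m3} (the frontal slices of the t-product). Then Σ_{k=1}^{m3} ‖Z_k − W_k‖_F² = (1/m3) Σ_{k=1}^{m3} ‖X̃_k Ỹ_k − W̃_k‖_F², where X̃_k, Ỹ_k, W̃_k are the DFT slices of (X_k), (Y_k), (W_k) respectively. -/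
open Matrix Complex BigOperators

noncomputable section

/-- The DFT slices `Ã_k = Σ_l ω^{(k-1)(l-1)} A_l` (zero-based indexing). -/
def dftSlices (m3 : ℕ) {m1 m2 : ℕ} (A : Fin m3 → Matrix (Fin m1) (Fin m2) ℂ) :
    Fin m3 → Matrix (Fin m1) (Fin m2) ℂ :=
  fun k => ∑ l : Fin m3,
    Complex.exp (2 * Real.pi * Complex.I / m3) ^ ((k : ℕ) * (l : ℕ)) • A l

/-- The DFT slices of a family of real matrices. -/
def dftSlicesR (m3 : ℕ) {m1 m2 : ℕ} (A : Fin m3 → Matrix (Fin m1) (Fin m2) ℝ) :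
    Fin m3 → Matrix (Fin m1) (Fin m2) ℂ :=
  dftSlices m3 (fun l => (A l).map (Complex.ofReal))

/-- Squared Frobenius norm of a complex matrix. -/
def frobSqC {a b : ℕ} (M : Matrix (Fin a) (Fin b) ℂ) : ℝ :=
  ∑ i, ∑ j, ‖M i j‖ ^ 2

/-- Squared Frobenius norm of a real matrix. -/
def frobSqR {a b : ℕ} (M : Matrix (Fin a) (Fin b) ℝ) : ℝ :=
  ∑ i, ∑ j, (M i j) ^ 2

namespace TProdAux

def ω (m3 : ℕ) : ℂ := Complex.exp (2 * Real.pi * Complex.I / m3)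

lemma omega_ne_zero (m3 : ℕ) : ω m3 ≠ 0 := Complex.exp_ne_zero _

lemma omega_pow_self (m3 : ℕ) (hm3 : 0 < m3) : ω m3 ^ m3 = 1 := by
  rw [ω, ← Complex.exp_nat_mul]
  have h : (m3 : ℂ) ≠ 0 := Nat.cast_ne_zero.mpr hm3.ne'
  rw [show (m3 : ℂ) * (2 * Real.pi * Complex.I / m3) = 2 * Real.pi * Complex.I by
    field_simp]
  exact Complex.exp_two_pi_mul_I

lemma omega_pow_mod (m3 : ℕ) (hm3 : 0 < m3) (n : ℕ) : ω m3 ^ n = ω m3 ^ (n % m3) := by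
  conv_lhs => rw [← Nat.div_add_mod n m3]
  rw [pow_add, pow_mul, omega_pow_self m3 hm3, one_pow, one_mul]

lemma omega_pow_congr (m3 : ℕ) (hm3 : 0 < m3) {a b : ℕ} (h : a ≡ b [MOD m3]) :
    ω m3 ^ a = ω m3 ^ b := by
  rw [omega_pow_mod m3 hm3 a, omega_pow_mod m3 hm3 b, h]

lemma conj_omega_pow (m3 : ℕ) (n : ℕ) :
    (starRingEnd ℂ) (ω m3 ^ n) = (ω m3)⁻¹ ^ n := by
  rw [map_pow]
  congr 1
  rw [ω, ← Complex.exp_conj, ← Complex.exp_neg]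
  congr 1
  simp only [map_div₀, _root_.map_mul, Complex.conj_I, map_ofNat, Complex.conj_ofReal,
    map_natCast]
  ring

lemma sum_zpow (m3 : ℕ) (hm3 : 0 < m3) (d : ℤ) :
    ∑ k : Fin m3, (ω m3 ^ d) ^ (k : ℕ) = if (m3 : ℤ) ∣ d then (m3 : ℂ) else 0 := by
  have hprim := Complex.isPrimitiveRoot_exp m3 hm3.ne'
  by_cases h : (m3 : ℤ) ∣ d
  · have h1 : ω m3 ^ d = 1 := (hprim.zpow_eq_one_iff_dvd d).2 h
    simp [h1, h, Finset.card_univ]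
  · have hne : ω m3 ^ d ≠ 1 := fun hc => h ((hprim.zpow_eq_one_iff_dvd d).1 hc)
    have hpow : (ω m3 ^ d) ^ m3 = 1 := by
      rw [← zpow_natCast (ω m3 ^ d), ← _root_.zpow_mul, mul_comm, _root_.zpow_mul,
        zpow_natCast, omega_pow_self m3 hm3, _root_.one_zpow]
    rw [Fin.sum_univ_eq_sum_range (fun k => (ω m3 ^ d) ^ k), geom_sum_eq hne, hpow]
    simp [h]

lemma dvd_iff_eq (m3 : ℕ) {l l' : Fin m3} :
    ((m3 : ℤ) ∣ (((l : ℕ) : ℤ) - ((l' : ℕ) : ℤ))) ↔ l = l' := by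
  constructor
  · intro h
    by_contra hne
    have hd0 : (((l : ℕ) : ℤ) - ((l' : ℕ) : ℤ)) ≠ 0 := by
      intro hc
      exact hne (Fin.ext (by exact_mod_cast sub_eq_zero.mp hc))
    have hle : (m3 : ℤ) ≤ |((l : ℕ) : ℤ) - ((l' : ℕ) : ℤ)| :=
      Int.le_of_dvd (abs_pos.mpr hd0) ((dvd_abs _ _).mpr h)
    have hl := l.isLt
    have hl' := l'.isLt
    have h2 : |((l : ℕ) : ℤ) - ((l' : ℕ) : ℤ)| < (m3 : ℤ) := by
      rw [abs_sub_lt_iff]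
      constructor <;> push_cast <;> omega
    exact absurd h2 (not_lt.mpr hle)
  · rintro rfl
    simp

lemma parseval (m3 : ℕ) (hm3 : 0 < m3) (f : Fin m3 → ℂ) :
    ∑ k : Fin m3, ‖∑ l : Fin m3, ω m3 ^ ((k : ℕ) * (l : ℕ)) * f l‖ ^ 2
      = m3 * ∑ l : Fin m3, ‖f l‖ ^ 2 := by
  have expand : ∀ k : Fin m3,
      (∑ l : Fin m3, ω m3 ^ ((k : ℕ) * (l : ℕ)) * f l)
        * (starRingEnd ℂ) (∑ l : Fin m3, ω m3 ^ ((k : ℕ) * (l : ℕ)) * f l)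
      = ∑ l : Fin m3, ∑ l' : Fin m3,
          (f l * (starRingEnd ℂ) (f l'))
            * ((ω m3 ^ (((l : ℕ) : ℤ) - ((l' : ℕ) : ℤ))) ^ (k : ℕ)) := by
    intro k
    rw [map_sum, Finset.sum_mul_sum]
    refine Finset.sum_congr rfl fun l _ => Finset.sum_congr rfl fun l' _ => ?_
    rw [_root_.map_mul, conj_omega_pow]
    have hω : ω m3 ^ ((k : ℕ) * (l : ℕ)) * (ω m3)⁻¹ ^ ((k : ℕ) * (l' : ℕ))
        = (ω m3 ^ (((l : ℕ) : ℤ) - ((l' : ℕ) : ℤ))) ^ (k : ℕ) := by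
      rw [← zpow_natCast (ω m3), inv_pow, ← zpow_natCast (ω m3), ← _root_.zpow_neg,
        ← zpow_add₀ (omega_ne_zero m3), ← zpow_natCast (ω m3 ^ _), ← _root_.zpow_mul]
      congr 1
      push_cast
      ring
    rw [← hω]
    ring
  have key : ∑ k : Fin m3,
      ((∑ l : Fin m3, ω m3 ^ ((k : ℕ) * (l : ℕ)) * f l)
        * (starRingEnd ℂ) (∑ l : Fin m3, ω m3 ^ ((k : ℕ) * (l : ℕ)) * f l))
      = (m3 : ℂ) * ∑ l : Fin m3, f l * (starRingEnd ℂ) (f l) := by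
    simp only [expand]
    rw [Finset.sum_comm]
    rw [Finset.mul_sum]
    refine Finset.sum_congr rfl fun l _ => ?_
    rw [Finset.sum_comm]
    have : ∀ l' : Fin m3,
        ∑ k : Fin m3, (f l * (starRingEnd ℂ) (f l'))
            * ((ω m3 ^ (((l : ℕ) : ℤ) - ((l' : ℕ) : ℤ))) ^ (k : ℕ))
        = (f l * (starRingEnd ℂ) (f l'))
            * (if l = l' then (m3 : ℂ) else 0) := by
      intro l'
      rw [← Finset.mul_sum, sum_zpow m3 hm3]
      congr 1
      simp [dvd_iff_eq m3]
    simp only [this, mul_ite, mul_zero]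
    rw [Finset.sum_ite_eq Finset.univ l (fun l' => f l * (starRingEnd ℂ) (f l') * (m3 : ℂ))]
    simp [mul_comm]
  have hre : ∀ z : ℂ, ‖z‖ ^ 2 = (z * (starRingEnd ℂ) z).re := by
    intro z
    rw [Complex.mul_conj]
    simp [Complex.sq_norm]
  calc ∑ k : Fin m3, ‖∑ l : Fin m3, ω m3 ^ ((k : ℕ) * (l : ℕ)) * f l‖ ^ 2
      = (∑ k : Fin m3, ((∑ l : Fin m3, ω m3 ^ ((k : ℕ) * (l : ℕ)) * f l)
          * (starRingEnd ℂ) (∑ l : Fin m3, ω m3 ^ ((k : ℕ) * (l : ℕ)) * f l))).re := by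
        rw [Complex.re_sum]
        exact Finset.sum_congr rfl fun k _ => hre _
    _ = ((m3 : ℂ) * ∑ l : Fin m3, f l * (starRingEnd ℂ) (f l)).re := by rw [key]
    _ = m3 * ∑ l : Fin m3, ‖f l‖ ^ 2 := by
        simp only [Complex.mul_conj, Complex.sq_norm]
        push_cast
        simp

lemma dft_sub (m3 : ℕ) {m1 m2 : ℕ} (A B : Fin m3 → Matrix (Fin m1) (Fin m2) ℂ) (k : Fin m3) :
    dftSlices m3 (fun l => A l - B l) k = dftSlices m3 A k - dftSlices m3 B k := by
  simp [dftSlices, smul_sub, Finset.sum_sub_distrib]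

lemma dft_conv (m3 : ℕ) {m1 m2 r : ℕ} (hm3 : 0 < m3)
    (Xc : Fin m3 → Matrix (Fin m1) (Fin r) ℂ) (Yc : Fin m3 → Matrix (Fin r) (Fin m2) ℂ)
    (Zc : Fin m3 → Matrix (Fin m1) (Fin m2) ℂ)
    (hZ : ∀ a : Fin m3, Zc a = ∑ l : Fin m3, Xc (a - l) * Yc l)
    (k : Fin m3) :
    dftSlices m3 Zc k = dftSlices m3 Xc k * dftSlices m3 Yc k := by
  haveI : NeZero m3 := ⟨hm3.ne'⟩
  unfold dftSlices
  simp_rw [hZ]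
  rw [Matrix.sum_mul]
  simp_rw [Matrix.mul_sum, Finset.smul_sum]
  conv_rhs => rw [Finset.sum_comm]
  rw [Finset.sum_comm]
  refine Finset.sum_congr rfl fun l _ => ?_
  rw [← Equiv.sum_comp (Equiv.addRight l)
    (fun a => Complex.exp (2 * Real.pi * Complex.I / m3) ^ ((k : ℕ) * ((a : Fin m3) : ℕ))
      • (Xc (a - l) * Yc l))]
  refine Finset.sum_congr rfl fun b _ => ?_
  simp only [Equiv.coe_addRight, add_sub_cancel_right]
  have hc : Complex.exp (2 * Real.pi * Complex.I / m3) ^ ((k : ℕ) * (((b + l) : Fin m3) : ℕ))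
      = Complex.exp (2 * Real.pi * Complex.I / m3) ^ ((k : ℕ) * (b : ℕ))
        * Complex.exp (2 * Real.pi * Complex.I / m3) ^ ((k : ℕ) * (l : ℕ)) := by
    rw [← pow_add]
    refine omega_pow_congr m3 hm3 ?_
    have hv : (((b + l) : Fin m3) : ℕ) = ((b : ℕ) + (l : ℕ)) % m3 := Fin.add_def b l ▸ rfl
    calc (k : ℕ) * (((b + l) : Fin m3) : ℕ)
        ≡ (k : ℕ) * ((b : ℕ) + (l : ℕ)) [MOD m3] := by
          rw [hv]; exact Nat.ModEq.mul_left _ (Nat.mod_modEq _ m3)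
      _ = (k : ℕ) * (b : ℕ) + (k : ℕ) * (l : ℕ) := by ring
  rw [hc, mul_smul, Matrix.smul_mul, Matrix.mul_smul]

lemma parseval_mat (m3 : ℕ) {m1 m2 : ℕ} (hm3 : 0 < m3)
    (D : Fin m3 → Matrix (Fin m1) (Fin m2) ℝ) :
    ∑ k : Fin m3, frobSqC (dftSlicesR m3 D k) = m3 * ∑ k : Fin m3, frobSqR (D k) := by
  have entry : ∀ (k : Fin m3) (i : Fin m1) (j : Fin m2),
      dftSlicesR m3 D k i j = ∑ l : Fin m3, ω m3 ^ ((k : ℕ) * (l : ℕ)) * ((D l i j : ℝ) : ℂ) := by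
    intro k i j
    simp [dftSlicesR, dftSlices, ω, Matrix.sum_apply, Matrix.smul_apply, Matrix.map_apply,
      smul_eq_mul]
  simp only [frobSqC, frobSqR, entry]
  have h1 : (∑ k : Fin m3, ∑ i : Fin m1, ∑ j : Fin m2,
      ‖∑ l : Fin m3, ω m3 ^ ((k : ℕ) * (l : ℕ)) * ((D l i j : ℝ) : ℂ)‖ ^ 2)
      = ∑ i : Fin m1, ∑ j : Fin m2, ∑ k : Fin m3,
        ‖∑ l : Fin m3, ω m3 ^ ((k : ℕ) * (l : ℕ)) * ((D l i j : ℝ) : ℂ)‖ ^ 2 := by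
    rw [Finset.sum_comm]
    exact Finset.sum_congr rfl fun i _ => Finset.sum_comm
  have h2 : (∑ k : Fin m3, ∑ i : Fin m1, ∑ j : Fin m2, (D k i j) ^ 2)
      = ∑ i : Fin m1, ∑ j : Fin m2, ∑ k : Fin m3, (D k i j) ^ 2 := by
    rw [Finset.sum_comm]
    exact Finset.sum_congr rfl fun i _ => Finset.sum_comm
  rw [h1, h2, Finset.mul_sum]
  refine Finset.sum_congr rfl fun i _ => ?_
  rw [Finset.mul_sum]
  refine Finset.sum_congr rfl fun j _ => ?_
  rw [parseval m3 hm3 (fun l => ((D l i j : ℝ) : ℂ))]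
  congr 1
  refine Finset.sum_congr rfl fun l _ => ?_
  rw [Complex.norm_real, Real.norm_eq_abs, _root_.sq_abs]

end TProdAux

open TProdAux in
/-- with `Z_k = Σ_l X_{(k-l) mod m3} Y_l` the t-product slices,
`Σ_k ‖Z_k − W_k‖_F² = (1/m3) Σ_k ‖X̃_k Ỹ_k − W̃_k‖_F²`. -/
theorem tProduct_fit_frobSq_dft (m1 m2 m3 r : ℕ)
    (hm1 : 0 < m1) (hm2 : 0 < m2) (hm3 : 0 < m3) (hr : 0 < r)
    (X : Fin m3 → Matrix (Fin m1) (Fin r) ℝ)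
    (Y : Fin m3 → Matrix (Fin r) (Fin m2) ℝ)
    (W : Fin m3 → Matrix (Fin m1) (Fin m2) ℝ) :
    ∑ k : Fin m3, frobSqR ((∑ l : Fin m3, X (k - l) * Y l) - W k) =
      (1 / (m3 : ℝ)) *
        ∑ k : Fin m3, frobSqC (dftSlicesR m3 X k * dftSlicesR m3 Y k - dftSlicesR m3 W k) := by
  set D : Fin m3 → Matrix (Fin m1) (Fin m2) ℝ :=
    fun k => (∑ l : Fin m3, X (k - l) * Y l) - W k with hD
  have hmap : ∀ a : Fin m3, (D a).map (Complex.ofReal) =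
      (∑ l : Fin m3, (X (a - l)).map Complex.ofReal * (Y l).map Complex.ofReal)
        - (W a).map Complex.ofReal := by
    intro a
    ext i j
    simp only [hD, Matrix.map_apply, Matrix.sub_apply, Matrix.sum_apply, Matrix.mul_apply]
    push_cast
    rfl
  have hdft : ∀ k : Fin m3,
      dftSlicesR m3 X k * dftSlicesR m3 Y k - dftSlicesR m3 W k = dftSlicesR m3 D k := by
    intro k
    have e1 : dftSlicesR m3 D k
        = dftSlices m3 (fun a => (∑ l : Fin m3,
            (X (a - l)).map Complex.ofReal * (Y l).map Complex.ofReal)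
            - (W a).map Complex.ofReal) k := by
      unfold dftSlicesR
      exact congrArg (fun A => dftSlices m3 A k) (funext hmap)
    have e2 : dftSlices m3 (fun a => (∑ l : Fin m3,
            (X (a - l)).map Complex.ofReal * (Y l).map Complex.ofReal)
            - (W a).map Complex.ofReal) k
        = dftSlices m3 (fun a => ∑ l : Fin m3,
            (X (a - l)).map Complex.ofReal * (Y l).map Complex.ofReal) k
          - dftSlices m3 (fun a => (W a).map Complex.ofReal) k :=
      dft_sub m3 _ _ k
    have e3 : dftSlices m3 (fun a => ∑ l : Fin m3,
            (X (a - l)).map Complex.ofReal * (Y l).map Complex.ofReal) k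
        = dftSlices m3 (fun l => (X l).map Complex.ofReal) k
          * dftSlices m3 (fun l => (Y l).map Complex.ofReal) k :=
      dft_conv m3 hm3 (fun l => (X l).map Complex.ofReal)
        (fun l => (Y l).map Complex.ofReal)
        (fun a => ∑ l : Fin m3, (X (a - l)).map Complex.ofReal * (Y l).map Complex.ofReal)
        (fun a => rfl) k
    rw [e1, e2, e3]
    rfl
  simp only [hdft]
  rw [parseval_mat m3 hm3 D]
  have : (m3 : ℝ) ≠ 0 := Nat.cast_ne_zero.mpr hm3.ne'
  field_simp
  rfl
end
end

section
/- Let m1, m2, m3, r be positive integers, let ρ1, ρ2, μ be real numbers, let H be a real (m1−1)×m1 matrix and K a real (m2−1)×m2 matrix. Let X_1,…,X_{m3} ∈ ℝ^{m1×r}, Y_1,…,Y_{m3} ∈ ℝ^{r×m2}, W_1,…,W_{m3} ∈ ℝ^{m1×m2}, and set Z_k = Σ_{l=1}^{m3} X_{((k−l) mod m3)+1} Y_l. Then ½ Σ_{k=1}^{m3} ‖Z_k − W_k‖_F² + (μ/2) Σ_{k=1}^{m3} ‖W_k‖_F² + (ρ1/2) Σ_{k=1}^{m3} ‖H Z_k‖_F²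 + (ρ2/2) Σ_{k=1}^{m3} ‖W_k Kᵀ‖_F² = (1/(2m3)) Σ_{k=1}^{m3} { ‖X̃_k Ỹ_k − W̃_k‖_F² + ρ1 ‖H X̃_k Ỹ_k‖_F² + ρ2 ‖W̃_k Kᵀ‖_F² + μ ‖W̃_k‖_F² }, where X̃_k, Ỹ_k, W̃_k are the DFT slices of (X_k), (Y_k), (W_k). -/
open Matrix Complex BigOperators

noncomputable section

/-- The t-product slices `Z_k = Σ_l X_{(k-l) mod m3} Y_l`. -/
def tprodSlices {m1 r m2 m3 : ℕ} (X : Fin m3 → Matrix (Fin m1) (Fin r) ℝ)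
    (Y : Fin m3 → Matrix (Fin r) (Fin m2) ℝ) : Fin m3 → Matrix (Fin m1) (Fin m2) ℝ :=
  fun k => ∑ l : Fin m3, X (k - l) * Y l

def ww (m3 : ℕ) : ℂ := Complex.exp (2 * Real.pi * Complex.I / m3)

lemma ww_pow (m3 : ℕ) (hm3 : 0 < m3) : ww m3 ^ m3 = 1 := by
  rw [ww, ← Complex.exp_nat_mul, mul_div_cancel₀ _ (by exact_mod_cast hm3.ne' : (m3:ℂ) ≠ 0)]
  exact Complex.exp_two_pi_mul_I

lemma ww_mod (m3 : ℕ) (hm3 : 0 < m3) (a : ℕ) : ww m3 ^ (a % m3) = ww m3 ^ a := by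
  rw [pow_eq_pow_mod a (ww_pow m3 hm3)]

lemma ww_ne_zero (m3 : ℕ) : ww m3 ≠ 0 := Complex.exp_ne_zero _

lemma ww_conj (m3 : ℕ) : (starRingEnd ℂ) (ww m3) = (ww m3)⁻¹ := by
  rw [ww, ← Complex.exp_conj, ← Complex.exp_neg]
  congr 1
  have h2 : (starRingEnd ℂ) 2 = 2 := map_ofNat _ 2
  simp [map_div₀, Complex.conj_I, h2]
  ring

lemma orth (m3 : ℕ) (hm3 : 0 < m3) (l l' : Fin m3) :
    ∑ k : Fin m3, ww m3 ^ ((k:ℕ)*(l:ℕ)) * (starRingEnd ℂ) (ww m3 ^ ((k:ℕ)*(l':ℕ)))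
      = if l = l' then (m3:ℂ) else 0 := by
  have hconj : ∀ n : ℕ, (starRingEnd ℂ) (ww m3 ^ n) = ((ww m3)⁻¹) ^ n := by
    intro n; rw [map_pow, ww_conj]
  set z : ℂ := ww m3 ^ (l:ℕ) * ((ww m3)⁻¹) ^ (l':ℕ) with hz
  have hterm : ∀ k : Fin m3, ww m3 ^ ((k:ℕ)*(l:ℕ)) * (starRingEnd ℂ) (ww m3 ^ ((k:ℕ)*(l':ℕ)))
      = z ^ (k:ℕ) := by
    intro k
    rw [hconj, hz, mul_pow, ← pow_mul, ← pow_mul, mul_comm (l:ℕ) (k:ℕ), mul_comm (l':ℕ) (k:ℕ)]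
  simp only [hterm]
  rw [Fin.sum_univ_eq_sum_range (fun n => z ^ n) m3]
  have hzm : z ^ m3 = 1 := by
    rw [hz, mul_pow, ← pow_mul, ← pow_mul, mul_comm (l:ℕ) m3, mul_comm (l':ℕ) m3,
      pow_mul, pow_mul, ww_pow m3 hm3, inv_pow, ww_pow m3 hm3]
    simp
  by_cases h : l = l'
  · subst h
    have hz1 : z = 1 := by
      rw [hz, inv_pow, mul_inv_cancel₀ (pow_ne_zero _ (ww_ne_zero m3))]
    simp [hz1]
  · have hz1 : z ≠ 1 := by
      intro hcon
      rw [hz, inv_pow, mul_inv_eq_one₀ (pow_ne_zero _ (ww_ne_zero m3))] at hcon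
      exact h (Fin.ext ((Complex.isPrimitiveRoot_exp m3 hm3.ne').pow_inj l.isLt l'.isLt hcon))
    rw [geom_sum_eq hz1, hzm]
    simp [h]

lemma parseval_entry (m3 : ℕ) (hm3 : 0 < m3) (a : Fin m3 → ℂ) :
    ∑ k : Fin m3, Complex.normSq (∑ l : Fin m3, ww m3 ^ ((k:ℕ)*(l:ℕ)) * a l)
      = m3 * ∑ l : Fin m3, Complex.normSq (a l) := by
  have key : (∑ k : Fin m3, ((∑ l : Fin m3, ww m3 ^ ((k:ℕ)*(l:ℕ)) * a l) *
      (starRingEnd ℂ) (∑ l : Fin m3, ww m3 ^ ((k:ℕ)*(l:ℕ)) * a l)))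
      = (m3 : ℂ) * ∑ l : Fin m3, a l * (starRingEnd ℂ) (a l) := by
    have expand : ∀ k : Fin m3,
        (∑ l : Fin m3, ww m3 ^ ((k:ℕ)*(l:ℕ)) * a l) *
          (starRingEnd ℂ) (∑ l : Fin m3, ww m3 ^ ((k:ℕ)*(l:ℕ)) * a l)
        = ∑ l : Fin m3, ∑ l' : Fin m3,
            (a l * (starRingEnd ℂ) (a l')) *
              (ww m3 ^ ((k:ℕ)*(l:ℕ)) * (starRingEnd ℂ) (ww m3 ^ ((k:ℕ)*(l':ℕ)))) := by
      intro k
      rw [map_sum, Finset.sum_mul_sum]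
      refine Finset.sum_congr rfl fun l _ => Finset.sum_congr rfl fun l' _ => ?_
      rw [_root_.map_mul]
      ring
    simp only [expand]
    rw [Finset.sum_comm]
    have : ∀ l : Fin m3, ∑ k : Fin m3, ∑ l' : Fin m3,
        (a l * (starRingEnd ℂ) (a l')) *
          (ww m3 ^ ((k:ℕ)*(l:ℕ)) * (starRingEnd ℂ) (ww m3 ^ ((k:ℕ)*(l':ℕ)))) 
        = (m3:ℂ) * (a l * (starRingEnd ℂ) (a l)) := by
      intro l
      rw [Finset.sum_comm]
      have : ∀ l' : Fin m3, ∑ k : Fin m3,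
          (a l * (starRingEnd ℂ) (a l')) *
            (ww m3 ^ ((k:ℕ)*(l:ℕ)) * (starRingEnd ℂ) (ww m3 ^ ((k:ℕ)*(l':ℕ))))
          = (a l * (starRingEnd ℂ) (a l')) * (if l = l' then (m3:ℂ) else 0) := by
        intro l'
        rw [← Finset.mul_sum, orth m3 hm3 l l']
      simp only [this]
      simp [Finset.sum_ite_eq]
      ring
    simp only [this]
    rw [← Finset.mul_sum]
  simp only [Complex.mul_conj] at key
  exact_mod_cast key

lemma sum_swap3 {m1 m2 m3 : ℕ} {α : Type*} [AddCommMonoid α] (f : Fin m3 → Fin m1 → Fin m2 → α) :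
    ∑ k, ∑ i, ∑ j, f k i j = ∑ i, ∑ j, ∑ k, f k i j := by
  rw [Finset.sum_comm]
  exact Finset.sum_congr rfl fun i _ => Finset.sum_comm

lemma parsevalR {m1 m2 : ℕ} (m3 : ℕ) (hm3 : 0 < m3) (A : Fin m3 → Matrix (Fin m1) (Fin m2) ℝ) :
    ∑ k : Fin m3, frobSqC (dftSlicesR m3 A k) = m3 * ∑ k : Fin m3, frobSqR (A k) := by
  have hentry : ∀ (k : Fin m3) (i : Fin m1) (j : Fin m2),
      dftSlicesR m3 A k i j = ∑ l : Fin m3, ww m3 ^ ((k:ℕ)*(l:ℕ)) * ((A l i j : ℝ) : ℂ) := by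
    intro k i j
    simp [dftSlicesR, dftSlices, ww, Matrix.sum_apply, Matrix.map_apply]
  simp only [frobSqC, frobSqR, Complex.sq_norm, hentry]
  rw [sum_swap3]
  have hij : ∀ (i : Fin m1) (j : Fin m2),
      ∑ k : Fin m3, Complex.normSq (∑ l : Fin m3, ww m3 ^ ((k:ℕ)*(l:ℕ)) * ((A l i j : ℝ) : ℂ))
        = m3 * ∑ l : Fin m3, (A l i j)^2 := by
    intro i j
    rw [parseval_entry m3 hm3 (fun l => ((A l i j : ℝ) : ℂ))]
    congr 1
    exact Finset.sum_congr rfl fun l _ => by simp [Complex.normSq_ofReal, sq]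
  simp only [hij]
  rw [sum_swap3 (fun k i j => (A k i j)^2)]
  simp [Finset.mul_sum]

lemma ww_mul_mod (m3 : ℕ) (hm3 : 0 < m3) (k a : ℕ) :
    ww m3 ^ (k * (a % m3)) = ww m3 ^ (k * a) := by
  rw [← ww_mod m3 hm3 (k*(a%m3)), ← ww_mod m3 hm3 (k*a)]
  congr 1
  conv_lhs => rw [Nat.mul_mod, Nat.mod_mod_of_dvd a dvd_rfl, ← Nat.mul_mod]

lemma dft_tprod {m1 r m2 : ℕ} (m3 : ℕ) (hm3 : 0 < m3)
    (X : Fin m3 → Matrix (Fin m1) (Fin r) ℝ) (Y : Fin m3 → Matrix (Fin r) (Fin m2) ℝ)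
    (k : Fin m3) :
    dftSlicesR m3 (tprodSlices X Y) k = dftSlicesR m3 X k * dftSlicesR m3 Y k := by
  haveI : NeZero m3 := ⟨hm3.ne'⟩
  have hmap : ∀ p : Fin m3, ((∑ l : Fin m3, X (p - l) * Y l).map (Complex.ofReal))
      = ∑ l : Fin m3, ((X (p - l)).map Complex.ofReal) * ((Y l).map Complex.ofReal) := by
    intro p
    ext i j
    simp [Matrix.map_apply, Matrix.sum_apply, Matrix.mul_apply]
  simp only [dftSlicesR, dftSlices, tprodSlices]
  simp only [hmap, Finset.smul_sum]
  rw [Finset.sum_comm, Matrix.mul_sum]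
  refine Finset.sum_congr rfl fun l _ => ?_
  rw [Matrix.sum_mul]
  refine (Fintype.sum_equiv (Equiv.addRight l) _ _ fun q => ?_).symm
  show (ww m3 ^ ((k:ℕ)*(q:ℕ)) • (X q).map Complex.ofReal) *
      (ww m3 ^ ((k:ℕ)*(l:ℕ)) • (Y l).map Complex.ofReal)
    = ww m3 ^ ((k:ℕ)*((q + l : Fin m3):ℕ)) • ((X ((q + l) - l)).map Complex.ofReal *
        (Y l).map Complex.ofReal)
  rw [add_sub_cancel_right, Matrix.smul_mul, Matrix.mul_smul, smul_smul]
  congr 1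
  rw [Fin.val_add, ww_mul_mod m3 hm3, Nat.mul_add, pow_add]

lemma dft_sub {m1 m2 : ℕ} (m3 : ℕ) (A B : Fin m3 → Matrix (Fin m1) (Fin m2) ℝ) (k : Fin m3) :
    dftSlicesR m3 (fun l => A l - B l) k = dftSlicesR m3 A k - dftSlicesR m3 B k := by
  simp only [dftSlicesR, dftSlices]
  rw [← Finset.sum_sub_distrib]
  refine Finset.sum_congr rfl fun l _ => ?_
  rw [← smul_sub]
  congr 1
  ext i j
  simp [Matrix.map_apply]

lemma dft_mul_left {p m1 m2 : ℕ} (m3 : ℕ) (H : Matrix (Fin p) (Fin m1) ℝ)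
    (A : Fin m3 → Matrix (Fin m1) (Fin m2) ℝ) (k : Fin m3) :
    dftSlicesR m3 (fun l => H * A l) k = H.map Complex.ofReal * dftSlicesR m3 A k := by
  simp only [dftSlicesR, dftSlices]
  rw [Matrix.mul_sum]
  refine Finset.sum_congr rfl fun l _ => ?_
  rw [Matrix.mul_smul]
  congr 1
  ext i j
  simp [Matrix.map_apply, Matrix.mul_apply]

lemma dft_mul_right {m1 m2 p : ℕ} (m3 : ℕ) (K : Matrix (Fin m2) (Fin p) ℝ)
    (A : Fin m3 → Matrix (Fin m1) (Fin m2) ℝ) (k : Fin m3) :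
    dftSlicesR m3 (fun l => A l * K) k = dftSlicesR m3 A k * K.map Complex.ofReal := by
  simp only [dftSlicesR, dftSlices]
  rw [Matrix.sum_mul]
  refine Finset.sum_congr rfl fun l _ => ?_
  rw [Matrix.smul_mul]
  congr 1
  ext i j
  simp [Matrix.map_apply, Matrix.mul_apply]

/-- the regularized objective equals its separable DFT-domain form. -/
theorem objective_dft_separation (m1 m2 m3 r : ℕ)
    (hm1 : 0 < m1) (hm2 : 0 < m2) (hm3 : 0 < m3) (hr : 0 < r)
    (ρ1 ρ2 μ : ℝ)
    (H : Matrix (Fin (m1 - 1)) (Fin m1) ℝ)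
    (K : Matrix (Fin (m2 - 1)) (Fin m2) ℝ)
    (X : Fin m3 → Matrix (Fin m1) (Fin r) ℝ)
    (Y : Fin m3 → Matrix (Fin r) (Fin m2) ℝ)
    (W : Fin m3 → Matrix (Fin m1) (Fin m2) ℝ) :
    (1 / 2) * (∑ k : Fin m3, frobSqR (tprodSlices X Y k - W k)) +
        (μ / 2) * (∑ k : Fin m3, frobSqR (W k)) +
        (ρ1 / 2) * (∑ k : Fin m3, frobSqR (H * tprodSlices X Y k)) +
        (ρ2 / 2) * (∑ k : Fin m3, frobSqR (W k * Kᵀ)) =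
      (1 / (2 * (m3 : ℝ))) *
        ∑ k : Fin m3,
          (frobSqC (dftSlicesR m3 X k * dftSlicesR m3 Y k - dftSlicesR m3 W k) +
            ρ1 * frobSqC (H.map (Complex.ofReal) * (dftSlicesR m3 X k * dftSlicesR m3 Y k)) +
            ρ2 * frobSqC (dftSlicesR m3 W k * (Kᵀ).map (Complex.ofReal)) +
            μ * frobSqC (dftSlicesR m3 W k)) := by
  have hm3' : (m3:ℝ) ≠ 0 := Nat.cast_ne_zero.mpr hm3.ne'
  have e1 : ∑ k : Fin m3, frobSqC (dftSlicesR m3 X k * dftSlicesR m3 Y k - dftSlicesR m3 W k)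
      = m3 * ∑ k : Fin m3, frobSqR (tprodSlices X Y k - W k) := by
    rw [← parsevalR m3 hm3 (fun l => tprodSlices X Y l - W l)]
    refine Finset.sum_congr rfl fun k _ => ?_
    rw [dft_sub, dft_tprod m3 hm3]
  have e2 : ∑ k : Fin m3, frobSqC (H.map (Complex.ofReal) * (dftSlicesR m3 X k * dftSlicesR m3 Y k))
      = m3 * ∑ k : Fin m3, frobSqR (H * tprodSlices X Y k) := by
    rw [← parsevalR m3 hm3 (fun l => H * tprodSlices X Y l)]
    refine Finset.sum_congr rfl fun k _ => ?_
    rw [dft_mul_left, dft_tprod m3 hm3]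
  have e3 : ∑ k : Fin m3, frobSqC (dftSlicesR m3 W k * (Kᵀ).map (Complex.ofReal))
      = m3 * ∑ k : Fin m3, frobSqR (W k * Kᵀ) := by
    rw [← parsevalR m3 hm3 (fun l => W l * Kᵀ)]
    exact Finset.sum_congr rfl fun k _ => by rw [dft_mul_right]
  have e4 : ∑ k : Fin m3, frobSqC (dftSlicesR m3 W k) = m3 * ∑ k : Fin m3, frobSqR (W k) :=
    parsevalR m3 hm3 W
  rw [Finset.sum_add_distrib, Finset.sum_add_distrib, Finset.sum_add_distrib,
      ← Finset.mul_sum, ← Finset.mul_sum, ← Finset.mul_sum, e1, e2, e3, e4]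
  field_simp
  ring
end
end

section
/- Let A be a complex m×m positive semidefinite Hermitian matrix with eigenvalues α_1 ≥ α_2 ≥ … ≥ α_m ≥ 0, let B be a complex m×n matrix with singular values β_1 ≥ β_2 ≥ … ≥ β_n ≥ 0, and let λ_1 ≥ λ_2 ≥ … ≥ λ_n be the eigenvalues of the Hermitian matrix C = B* A B. Then: (1) λ_{i+j−1} ≤ β_i² α_j for all i ∈ {1,…,n} and j ∈ {1,…,m} with i+j−1 ≤ n; and (2) β_i² α_j ≤ λ_{i+j−m} for all i ∈ {1,…,n} and j ∈ {1,…,m} with i+j > m. -/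
open Matrix ComplexOrder

noncomputable section

set_option maxHeartbeats 1000000

variable {N : ℕ}

local notation "⟪" x ", " y "⟫" => @inner ℂ _ _ x y

lemma repr_mulVec {M : Matrix (Fin N) (Fin N) ℂ} (hM : M.IsHermitian)
    (x : EuclideanSpace ℂ (Fin N)) (i : Fin N) :
    hM.eigenvectorBasis.repr (WithLp.toLp 2 (M *ᵥ x : Fin N → ℂ) : EuclideanSpace ℂ (Fin N)) i
      = (hM.eigenvalues i : ℂ) * hM.eigenvectorBasis.repr x i := by
  rw [hM.eigenvectorBasis.repr_apply_apply, hM.eigenvectorBasis.repr_apply_apply]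
  rw [EuclideanSpace.inner_eq_star_dotProduct, EuclideanSpace.inner_eq_star_dotProduct]
  show (M *ᵥ x.ofLp) ⬝ᵥ star ((hM.eigenvectorBasis i).ofLp)
      = (hM.eigenvalues i : ℂ) * (x.ofLp ⬝ᵥ star ((hM.eigenvectorBasis i).ofLp))
  rw [dotProduct_comm, dotProduct_comm x.ofLp]
  rw [dotProduct_mulVec]
  have h1 : star ((hM.eigenvectorBasis i).ofLp) ᵥ* M
      = star (M *ᵥ (hM.eigenvectorBasis i).ofLp) := by
    rw [Matrix.star_mulVec, hM.eq]
  rw [h1, hM.mulVec_eigenvectorBasis]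
  simp only [dotProduct, Pi.star_apply, Pi.smul_apply, star_smul, smul_eq_mul,
    Finset.mul_sum, Complex.star_def, Complex.conj_ofReal]
  exact Finset.sum_congr rfl fun j _ => by simp [Complex.real_smul]; ring

/-- Rayleigh quotient via eigen-coordinates. -/
lemma inner_mulVec_eq_sum {M : Matrix (Fin N) (Fin N) ℂ} (hM : M.IsHermitian)
    (x : EuclideanSpace ℂ (Fin N)) :
    ⟪x, (WithLp.toLp 2 (M *ᵥ x : Fin N → ℂ) : EuclideanSpace ℂ (Fin N))⟫
      = ∑ i, (hM.eigenvalues i : ℂ) * (‖hM.eigenvectorBasis.repr x i‖ : ℂ) ^ 2 := by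
  rw [← hM.eigenvectorBasis.repr.inner_map_map x, EuclideanSpace.inner_eq_star_dotProduct]
  simp only [dotProduct, Pi.star_apply]
  refine Finset.sum_congr rfl fun i _ => ?_
  rw [repr_mulVec hM]
  rw [show (hM.eigenvalues i : ℂ) * hM.eigenvectorBasis.repr x i * star (hM.eigenvectorBasis.repr x i)
    = (hM.eigenvalues i : ℂ) * (star (hM.eigenvectorBasis.repr x i) * hM.eigenvectorBasis.repr x i) by ring]
  congr 1
  rw [Complex.star_def, ← Complex.normSq_eq_conj_mul_self, Complex.normSq_eq_norm_sq]
  norm_cast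

variable {M : Matrix (Fin N) (Fin N) ℂ}

/-- Span of a set of eigenvectors. -/
def spectralSpan (hM : M.IsHermitian) (s : Finset (Fin N)) :
    Submodule ℂ (EuclideanSpace ℂ (Fin N)) :=
  Submodule.span ℂ (hM.eigenvectorBasis '' ↑s)

lemma finrank_spectralSpan (hM : M.IsHermitian) (s : Finset (Fin N)) :
    Module.finrank ℂ (spectralSpan hM s) = s.card := by
  have hli : LinearIndependent ℂ (fun i : s => hM.eigenvectorBasis i) :=
    (hM.eigenvectorBasis.orthonormal.linearIndependent).comp _ Subtype.coe_injective
  have : spectralSpan hM s = Submodule.span ℂ (Set.range fun i : s => hM.eigenvectorBasis i) := by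
    rw [spectralSpan]; congr 1; ext y
    simp [Set.range_comp]
  rw [this, finrank_span_eq_card hli, Fintype.card_coe]

lemma repr_eq_zero_of_not_mem (hM : M.IsHermitian) (s : Finset (Fin N))
    {x : EuclideanSpace ℂ (Fin N)} (hx : x ∈ spectralSpan hM s) {i : Fin N} (hi : i ∉ s) :
    hM.eigenvectorBasis.repr x i = 0 := by
  rw [hM.eigenvectorBasis.repr_apply_apply]
  induction hx using Submodule.span_induction with
  | mem y hy =>
    obtain ⟨j, hj, rfl⟩ := hy
    exact hM.eigenvectorBasis.orthonormal.2 (fun h => hi (h ▸ hj))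
  | zero => exact inner_zero_right _
  | add y z _ _ hy hz => rw [inner_add_right, hy, hz, add_zero]
  | smul c y _ hy => rw [inner_smul_right, hy, mul_zero]

lemma norm_sq_eq_sum_repr (hM : M.IsHermitian) (x : EuclideanSpace ℂ (Fin N)) :
    ‖x‖ ^ 2 = ∑ i, ‖hM.eigenvectorBasis.repr x i‖ ^ 2 := by
  rw [← hM.eigenvectorBasis.repr.norm_map x, EuclideanSpace.norm_eq,
    Real.sq_sqrt (by positivity)]

lemma re_inner_mulVec (hM : M.IsHermitian) (x : EuclideanSpace ℂ (Fin N)) :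
    Complex.re ⟪x, (WithLp.toLp 2 (M *ᵥ x : Fin N → ℂ) : EuclideanSpace ℂ (Fin N))⟫
      = ∑ i, hM.eigenvalues i * ‖hM.eigenvectorBasis.repr x i‖ ^ 2 := by
  rw [inner_mulVec_eq_sum hM]
  rw [Complex.re_sum]
  refine Finset.sum_congr rfl fun i _ => ?_
  norm_cast

lemma quad_le_of_mem (hM : M.IsHermitian) (s : Finset (Fin N)) (c : ℝ)
    (hc : ∀ i ∈ s, hM.eigenvalues i ≤ c) {x : EuclideanSpace ℂ (Fin N)}
    (hx : x ∈ spectralSpan hM s) :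
    Complex.re ⟪x, (WithLp.toLp 2 (M *ᵥ x : Fin N → ℂ) : EuclideanSpace ℂ (Fin N))⟫ ≤ c * ‖x‖ ^ 2 := by
  rw [re_inner_mulVec hM, norm_sq_eq_sum_repr hM, Finset.mul_sum]
  refine Finset.sum_le_sum fun i _ => ?_
  by_cases hi : i ∈ s
  · exact mul_le_mul_of_nonneg_right (hc i hi) (by positivity)
  · simp [repr_eq_zero_of_not_mem hM s hx hi]

lemma quad_ge_of_mem (hM : M.IsHermitian) (s : Finset (Fin N)) (c : ℝ)
    (hc : ∀ i ∈ s, c ≤ hM.eigenvalues i) {x : EuclideanSpace ℂ (Fin N)}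
    (hx : x ∈ spectralSpan hM s) :
    c * ‖x‖ ^ 2 ≤ Complex.re ⟪x, (WithLp.toLp 2 (M *ᵥ x : Fin N → ℂ) : EuclideanSpace ℂ (Fin N))⟫ := by
  rw [re_inner_mulVec hM, norm_sq_eq_sum_repr hM, Finset.mul_sum]
  refine Finset.sum_le_sum fun i _ => ?_
  by_cases hi : i ∈ s
  · exact mul_le_mul_of_nonneg_right (hc i hi) (by positivity)
  · simp [repr_eq_zero_of_not_mem hM s hx hi]

lemma exists_ne_zero_mem_inf (V W : Submodule ℂ (EuclideanSpace ℂ (Fin N)))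
    (h : N < Module.finrank ℂ V + Module.finrank ℂ W) :
    ∃ x : EuclideanSpace ℂ (Fin N), x ≠ 0 ∧ x ∈ V ∧ x ∈ W := by
  have h1 := Submodule.finrank_sup_add_finrank_inf_eq V W
  have h2 : Module.finrank ℂ (V ⊔ W : Submodule ℂ (EuclideanSpace ℂ (Fin N))) ≤ N := by
    simpa [finrank_euclideanSpace, Fintype.card_fin] using (V ⊔ W).finrank_le
  have h3 : 0 < Module.finrank ℂ (V ⊓ W : Submodule ℂ (EuclideanSpace ℂ (Fin N))) := by omega
  have h4 : V ⊓ W ≠ ⊥ := by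
    intro hb
    rw [hb, finrank_bot] at h3
    omega
  obtain ⟨x, hx, hne⟩ := Submodule.exists_mem_ne_zero_of_ne_bot h4
  exact ⟨x, hne, (Submodule.mem_inf.mp hx).1, (Submodule.mem_inf.mp hx).2⟩

/-- Easy direction of Courant–Fischer: an upper bound for the k-th sorted eigenvalue. -/
lemma cf_upper (hM : M.IsHermitian) (μ : Fin N → ℝ) (σ : Equiv.Perm (Fin N))
    (hμ : ∀ i, μ i = hM.eigenvalues (σ i))
    (hanti : ∀ i j : Fin N, i ≤ j → μ j ≤ μ i) (k : Fin N) (c : ℝ)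
    (V : Submodule ℂ (EuclideanSpace ℂ (Fin N))) (hdim : N - (k : ℕ) ≤ Module.finrank ℂ V)
    (hV : ∀ x ∈ V,
      Complex.re ⟪x, (WithLp.toLp 2 (M *ᵥ x : Fin N → ℂ) : EuclideanSpace ℂ (Fin N))⟫ ≤ c * ‖x‖ ^ 2) :
    μ k ≤ c := by
  have hk := k.isLt
  set s := (Finset.Iic k).image σ with hs
  have hcard : s.card = (k : ℕ) + 1 := by
    rw [hs, Finset.card_image_of_injective _ σ.injective, Fin.card_Iic]
  have hW := finrank_spectralSpan hM s
  obtain ⟨x, hne, hxV, hxW⟩ := exists_ne_zero_mem_inf V (spectralSpan hM s) (by omega)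
  have hge := quad_ge_of_mem hM s (μ k) (fun i hi => by
    obtain ⟨l, hl, rfl⟩ := Finset.mem_image.mp hi
    rw [← hμ l]
    exact hanti l k (Finset.mem_Iic.mp hl)) hxW
  have hle := hV x hxV
  have hx2 : (0 : ℝ) < ‖x‖ ^ 2 := pow_pos (norm_pos_iff.mpr hne) 2
  have := hge.trans hle
  nlinarith

/-- Easy direction of Courant–Fischer: a lower bound for the k-th sorted eigenvalue. -/
lemma cf_lower (hM : M.IsHermitian) (μ : Fin N → ℝ) (σ : Equiv.Perm (Fin N))
    (hμ : ∀ i, μ i = hM.eigenvalues (σ i))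
    (hanti : ∀ i j : Fin N, i ≤ j → μ j ≤ μ i) (k : Fin N) (c : ℝ)
    (V : Submodule ℂ (EuclideanSpace ℂ (Fin N))) (hdim : (k : ℕ) + 1 ≤ Module.finrank ℂ V)
    (hV : ∀ x ∈ V,
      c * ‖x‖ ^ 2 ≤ Complex.re ⟪x, (WithLp.toLp 2 (M *ᵥ x : Fin N → ℂ) : EuclideanSpace ℂ (Fin N))⟫) :
    c ≤ μ k := by
  have hk := k.isLt
  set s := (Finset.Ici k).image σ with hs
  have hcard : s.card = N - (k : ℕ) := by
    rw [hs, Finset.card_image_of_injective _ σ.injective, Fin.card_Ici]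
  have hW := finrank_spectralSpan hM s
  obtain ⟨x, hne, hxV, hxW⟩ := exists_ne_zero_mem_inf V (spectralSpan hM s) (by omega)
  have hle := quad_le_of_mem hM s (μ k) (fun i hi => by
    obtain ⟨l, hl, rfl⟩ := Finset.mem_image.mp hi
    rw [← hμ l]
    exact hanti k l (Finset.mem_Ici.mp hl)) hxW
  have hge := hV x hxV
  have hx2 : (0 : ℝ) < ‖x‖ ^ 2 := pow_pos (norm_pos_iff.mpr hne) 2
  have := hge.trans hle
  nlinarith

lemma finrank_comap_bound {n m : ℕ}
    (f : EuclideanSpace ℂ (Fin n) →ₗ[ℂ] EuclideanSpace ℂ (Fin m))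
    (T : Submodule ℂ (EuclideanSpace ℂ (Fin m))) :
    n + Module.finrank ℂ T ≤ Module.finrank ℂ (T.comap f) + m := by
  have hker : LinearMap.ker (T.mkQ ∘ₗ f) = T.comap f := by
    rw [LinearMap.ker_comp, Submodule.ker_mkQ]
  have e1 := LinearMap.finrank_range_add_finrank_ker (T.mkQ ∘ₗ f)
  have e2 := Submodule.finrank_quotient_add_finrank T
  have e3 : Module.finrank ℂ (LinearMap.range (T.mkQ ∘ₗ f))
      ≤ Module.finrank ℂ (EuclideanSpace ℂ (Fin m) ⧸ T) := (LinearMap.range _).finrank_le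
  rw [hker] at e1
  have e4 : Module.finrank ℂ (EuclideanSpace ℂ (Fin n)) = n := by
    simp [finrank_euclideanSpace, Fintype.card_fin]
  have e5 : Module.finrank ℂ (EuclideanSpace ℂ (Fin m)) = m := by
    simp [finrank_euclideanSpace, Fintype.card_fin]
  omega

lemma inner_conj_eq {m n : ℕ} (A : Matrix (Fin m) (Fin m) ℂ) (B : Matrix (Fin m) (Fin n) ℂ)
    (x : EuclideanSpace ℂ (Fin n)) :
    ⟪x, (WithLp.toLp 2 ((Bᴴ * A * B) *ᵥ x : Fin n → ℂ) : EuclideanSpace ℂ (Fin n))⟫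
      = ⟪(WithLp.equiv 2 (Fin m → ℂ)).symm (B *ᵥ x),
          (WithLp.equiv 2 (Fin m → ℂ)).symm (A *ᵥ (B *ᵥ x))⟫ := by
  show ((Bᴴ * A * B) *ᵥ x) ⬝ᵥ star (x : Fin n → ℂ)
      = (A *ᵥ (B *ᵥ x)) ⬝ᵥ star (B *ᵥ (x : Fin n → ℂ))
  rw [dotProduct_comm, dotProduct_comm (A *ᵥ _)]
  rw [← Matrix.mulVec_mulVec, ← Matrix.mulVec_mulVec, dotProduct_mulVec,
    Matrix.star_mulVec]

lemma inner_gram_eq {m n : ℕ} (B : Matrix (Fin m) (Fin n) ℂ) (x : EuclideanSpace ℂ (Fin n)) :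
    ⟪x, (WithLp.toLp 2 ((Bᴴ * B) *ᵥ x : Fin n → ℂ) : EuclideanSpace ℂ (Fin n))⟫
      = ⟪(WithLp.equiv 2 (Fin m → ℂ)).symm (B *ᵥ x),
          (WithLp.equiv 2 (Fin m → ℂ)).symm (B *ᵥ x)⟫ := by
  show ((Bᴴ * B) *ᵥ x) ⬝ᵥ star (x : Fin n → ℂ)
      = (B *ᵥ x) ⬝ᵥ star (B *ᵥ (x : Fin n → ℂ))
  rw [dotProduct_comm, dotProduct_comm (B *ᵥ _)]
  rw [← Matrix.mulVec_mulVec, dotProduct_mulVec, Matrix.star_mulVec]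



/-- interlacing-type inequalities for the eigenvalues of `B* A B`
in terms of the eigenvalues of the PSD Hermitian `A` and the singular values of `B`. -/
theorem eigenvalues_conj_bounds (m n : ℕ) (hm : 0 < m) (hn : 0 < n)
    (A : Matrix (Fin m) (Fin m) ℂ) (hA : A.PosSemidef)
    (B : Matrix (Fin m) (Fin n) ℂ)
    (hC : (Bᴴ * A * B).IsHermitian)
    (hBB : (Bᴴ * B).IsHermitian)
    (α : Fin m → ℝ) (hα_anti : ∀ i j : Fin m, i ≤ j → α j ≤ α i)
    (hα_eig : ∃ σ : Equiv.Perm (Fin m), ∀ i, α i = hA.1.eigenvalues (σ i))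
    (β : Fin n → ℝ) (hβ_nonneg : ∀ i, 0 ≤ β i)
    (hβ_anti : ∀ i j : Fin n, i ≤ j → β j ≤ β i)
    (hβ_sv : ∃ τ : Equiv.Perm (Fin n), ∀ i, β i ^ 2 = hBB.eigenvalues (τ i))
    (lam : Fin n → ℝ) (hlam_anti : ∀ i j : Fin n, i ≤ j → lam j ≤ lam i)
    (hlam_eig : ∃ π : Equiv.Perm (Fin n), ∀ i, lam i = hC.eigenvalues (π i)) :
    (∀ (i : Fin n) (j : Fin m) (h : (i : ℕ) + (j : ℕ) < n),
        lam ⟨(i : ℕ) + (j : ℕ), h⟩ ≤ β i ^ 2 * α j) ∧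
      (∀ (i : Fin n) (j : Fin m), m ≤ (i : ℕ) + (j : ℕ) + 1 →
        β i ^ 2 * α j ≤
          lam ⟨(i : ℕ) + (j : ℕ) + 1 - m, by
            have hi := i.isLt; have hj := j.isLt; omega⟩) := by
  obtain ⟨σ, hσ⟩ := hα_eig
  obtain ⟨τ, hτ⟩ := hβ_sv
  obtain ⟨π, hπ⟩ := hlam_eig
  have hαnn : ∀ j, 0 ≤ α j := fun j => (hσ j) ▸ hA.eigenvalues_nonneg (σ j)
  constructor
  · -- upper bounds
    intro i j h
    set T := spectralSpan hA.1 ((Finset.Ici j).image σ) with hTdef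
    set V1 := spectralSpan hBB ((Finset.Ici i).image τ) with hV1def
    set V2 := T.comap (Matrix.toEuclideanLin B) with hV2def
    have hT : Module.finrank ℂ T = m - (j : ℕ) := by
      rw [hTdef, finrank_spectralSpan,
        Finset.card_image_of_injective _ σ.injective, Fin.card_Ici]
    have hV1 : Module.finrank ℂ V1 = n - (i : ℕ) := by
      rw [hV1def, finrank_spectralSpan,
        Finset.card_image_of_injective _ τ.injective, Fin.card_Ici]
    have hV2 := finrank_comap_bound (Matrix.toEuclideanLin B) T
    rw [← hV2def] at hV2
    have einf := Submodule.finrank_sup_add_finrank_inf_eq V1 V2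
    have esup : Module.finrank ℂ (V1 ⊔ V2 : Submodule ℂ (EuclideanSpace ℂ (Fin n))) ≤ n := by
      simpa [finrank_euclideanSpace, Fintype.card_fin] using (V1 ⊔ V2).finrank_le
    have hi := i.isLt; have hj := j.isLt
    refine cf_upper hC lam π hπ hlam_anti ⟨(i : ℕ) + (j : ℕ), h⟩ _ (V1 ⊓ V2) (by
      simp only [Fin.val_mk]; omega) ?_
    intro x hx
    obtain ⟨hx1, hx2⟩ := Submodule.mem_inf.mp hx
    have hBx : (WithLp.equiv 2 (Fin m → ℂ)).symm (B *ᵥ x) ∈ T := hx2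
    have q1 := quad_le_of_mem hA.1 ((Finset.Ici j).image σ) (α j) (fun l hl => by
      obtain ⟨p, hp, rfl⟩ := Finset.mem_image.mp hl
      rw [← hσ p]
      exact hα_anti j p (Finset.mem_Ici.mp hp)) hBx
    have q2 := quad_le_of_mem hBB ((Finset.Ici i).image τ) (β i ^ 2) (fun l hl => by
      obtain ⟨p, hp, rfl⟩ := Finset.mem_image.mp hl
      rw [← hτ p]
      exact pow_le_pow_left₀ (hβ_nonneg p) (hβ_anti i p (Finset.mem_Ici.mp hp)) 2) hx1
    have hnrm : Complex.re ⟪(WithLp.equiv 2 (Fin m → ℂ)).symm (B *ᵥ x),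
        (WithLp.equiv 2 (Fin m → ℂ)).symm (B *ᵥ x)⟫
        = ‖(WithLp.equiv 2 (Fin m → ℂ)).symm (B *ᵥ x)‖ ^ 2 := by
      rw [← inner_self_eq_norm_sq (𝕜 := ℂ)]; rfl
    calc Complex.re ⟪x, (WithLp.toLp 2 ((Bᴴ * A * B) *ᵥ x : Fin n → ℂ) : EuclideanSpace ℂ (Fin n))⟫
        = Complex.re ⟪(WithLp.equiv 2 (Fin m → ℂ)).symm (B *ᵥ x),
            (WithLp.equiv 2 (Fin m → ℂ)).symm (A *ᵥ (B *ᵥ x))⟫ := by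
          rw [inner_conj_eq]
      _ ≤ α j * ‖(WithLp.equiv 2 (Fin m → ℂ)).symm (B *ᵥ x)‖ ^ 2 := q1
      _ = α j * Complex.re ⟪x, (WithLp.toLp 2 ((Bᴴ * B) *ᵥ x : Fin n → ℂ) : EuclideanSpace ℂ (Fin n))⟫ := by
          rw [← hnrm, inner_gram_eq]
      _ ≤ α j * (β i ^ 2 * ‖x‖ ^ 2) := mul_le_mul_of_nonneg_left q2 (hαnn j)
      _ = (β i ^ 2 * α j) * ‖x‖ ^ 2 := by ring
  · -- lower bounds
    intro i j hmij
    set T := spectralSpan hA.1 ((Finset.Iic j).image σ) with hTdef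
    set V1 := spectralSpan hBB ((Finset.Iic i).image τ) with hV1def
    set V2 := T.comap (Matrix.toEuclideanLin B) with hV2def
    have hT : Module.finrank ℂ T = (j : ℕ) + 1 := by
      rw [hTdef, finrank_spectralSpan,
        Finset.card_image_of_injective _ σ.injective, Fin.card_Iic]
    have hV1 : Module.finrank ℂ V1 = (i : ℕ) + 1 := by
      rw [hV1def, finrank_spectralSpan,
        Finset.card_image_of_injective _ τ.injective, Fin.card_Iic]
    have hV2 := finrank_comap_bound (Matrix.toEuclideanLin B) T
    rw [← hV2def] at hV2
    have einf := Submodule.finrank_sup_add_finrank_inf_eq V1 V2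
    have esup : Module.finrank ℂ (V1 ⊔ V2 : Submodule ℂ (EuclideanSpace ℂ (Fin n))) ≤ n := by
      simpa [finrank_euclideanSpace, Fintype.card_fin] using (V1 ⊔ V2).finrank_le
    have hi := i.isLt; have hj := j.isLt
    refine cf_lower hC lam π hπ hlam_anti _ _ (V1 ⊓ V2) (by
      simp only [Fin.val_mk]; omega) ?_
    intro x hx
    obtain ⟨hx1, hx2⟩ := Submodule.mem_inf.mp hx
    have hBx : (WithLp.equiv 2 (Fin m → ℂ)).symm (B *ᵥ x) ∈ T := hx2
    have q1 := quad_ge_of_mem hA.1 ((Finset.Iic j).image σ) (α j) (fun l hl => by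
      obtain ⟨p, hp, rfl⟩ := Finset.mem_image.mp hl
      rw [← hσ p]
      exact hα_anti p j (Finset.mem_Iic.mp hp)) hBx
    have q2 := quad_ge_of_mem hBB ((Finset.Iic i).image τ) (β i ^ 2) (fun l hl => by
      obtain ⟨p, hp, rfl⟩ := Finset.mem_image.mp hl
      rw [← hτ p]
      exact pow_le_pow_left₀ (hβ_nonneg i) (hβ_anti p i (Finset.mem_Iic.mp hp)) 2) hx1
    have hnrm : Complex.re ⟪(WithLp.equiv 2 (Fin m → ℂ)).symm (B *ᵥ x),
        (WithLp.equiv 2 (Fin m → ℂ)).symm (B *ᵥ x)⟫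
        = ‖(WithLp.equiv 2 (Fin m → ℂ)).symm (B *ᵥ x)‖ ^ 2 := by
      rw [← inner_self_eq_norm_sq (𝕜 := ℂ)]; rfl
    calc (β i ^ 2 * α j) * ‖x‖ ^ 2
        = α j * (β i ^ 2 * ‖x‖ ^ 2) := by ring
      _ ≤ α j * Complex.re ⟪x, (WithLp.toLp 2 ((Bᴴ * B) *ᵥ x : Fin n → ℂ) : EuclideanSpace ℂ (Fin n))⟫ :=
          mul_le_mul_of_nonneg_left q2 (hαnn j)
      _ = α j * ‖(WithLp.equiv 2 (Fin m → ℂ)).symm (B *ᵥ x)‖ ^ 2 := by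
          rw [← hnrm, inner_gram_eq]
      _ ≤ Complex.re ⟪(WithLp.equiv 2 (Fin m → ℂ)).symm (B *ᵥ x),
            (WithLp.equiv 2 (Fin m → ℂ)).symm (A *ᵥ (B *ᵥ x))⟫ := q1
      _ = Complex.re ⟪x, (WithLp.toLp 2 ((Bᴴ * A * B) *ᵥ x : Fin n → ℂ) : EuclideanSpace ℂ (Fin n))⟫ := by
          rw [inner_conj_eq]
end
end

section
/- Let m1, m2, r be positive integers with m1 ≥ 2, let ρ1 ≥ 0, let H be the real (m1−1)×m1 Toeplitz matrix with ones on the diagonal and minus ones on the first superdiagonal, and set H_{ρ1} = I_{m1} + ρ1 Hᵀ H. Let W ∈ ℂ^{m1×m2}, X ∈ ℂ^{m1×r}, Y ∈ ℂ^{r×m2}, and define G = (XY − W)Y* + ρ1 Hᵀ H X Y Y* (the partial gradient ∇_X h at (X,Y) of h(X,Y) = ½(‖XY−W‖_F² + ρ1‖HXY‖_F²)). Suppose Y = U S V* where U ∈ ℂ^{r×r} and V ∈ ℂ^{m2×m2} are unitary and S is an r×m2 rectangular diagonal matrix with diagonal entries σ_1 ≥ … ≥ σ_t > 0 followed by zeros,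 and let U_1 denote the r×t submatrix of U consisting of its first t columns. Let P be a matrix satisfying the four Penrose equations for Y Y*, and set d = −H_{ρ1}^{−1} G P. Then Re tr(G* d) ≤ −(1/((1+4ρ1) σ_1²)) · ‖G U_1‖_F². -/
open Matrix Complex BigOperators

noncomputable section

set_option maxHeartbeats 1600000

/-- The `(m-1) × m` finite-difference Toeplitz matrix `Toeplitz(0,1,-1)`. -/
def toeplitzD (m : ℕ) : Matrix (Fin (m - 1)) (Fin m) ℝ :=
  Matrix.of fun i j =>
    if (j : ℕ) = (i : ℕ) then 1 else if (j : ℕ) = (i : ℕ) + 1 then -1 else 0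

/-- `HᵀH` as a complex matrix, for `H` the Toeplitz matrix. -/
def HtH (m : ℕ) : Matrix (Fin m) (Fin m) ℂ :=
  ((toeplitzD m)ᵀ * toeplitzD m).map (Complex.ofReal)

section Aux

open ComplexOrder
open scoped MatrixOrder

lemma psd_smul {n : ℕ} {M : Matrix (Fin n) (Fin n) ℂ} (hM : M.PosSemidef)
    {c : ℝ} (hc : 0 ≤ c) : ((c : ℂ) • M).PosSemidef := by
  rw [posSemidef_iff_dotProduct_mulVec]
  constructor
  · unfold Matrix.IsHermitian
    rw [conjTranspose_smul, hM.1.eq]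
    norm_num
  · intro x
    rw [smul_mulVec, dotProduct_smul, smul_eq_mul]
    exact mul_nonneg (by exact_mod_cast hc) (hM.dotProduct_mulVec_nonneg x)

lemma psd_trace_re_nonneg {n : ℕ} {M : Matrix (Fin n) (Fin n) ℂ} (hM : M.PosSemidef) :
    0 ≤ M.trace.re := by
  have h : ∀ i, 0 ≤ (M i i).re := by
    intro i
    have := hM.dotProduct_mulVec_nonneg (Pi.single i 1)
    simp [dotProduct, mulVec, Pi.single_apply, Finset.sum_ite_eq', dotProduct] at this
    rw [Complex.le_def] at this
    simpa using this.1
  rw [Matrix.trace]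
  simp only [Matrix.diag]
  rw [Complex.re_sum]
  exact Finset.sum_nonneg fun i _ => h i

lemma penrose_unique {n : ℕ} (M P Q : Matrix (Fin n) (Fin n) ℂ)
    (hP1 : M * P * M = M) (hP2 : P * M * P = P) (hP3 : (M*P)ᴴ = M*P) (hP4 : (P*M)ᴴ = P*M)
    (hQ1 : M * Q * M = M) (hQ2 : Q * M * Q = Q) (hQ3 : (M*Q)ᴴ = M*Q) (hQ4 : (Q*M)ᴴ = Q*M) :
    P = Q := by
  have hPMQM : P * M = Q * M := by
    have h1 : P * M = (P * M) * (Q * M) := by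
      calc P * M = P * (M * Q * M) := by rw [hQ1]
      _ = (P * M) * (Q * M) := by noncomm_ring
    calc P * M = (P*M)ᴴ := hP4.symm
    _ = ((P * M) * (Q * M))ᴴ := by rw [← h1]
    _ = (Q*M)ᴴ * (P*M)ᴴ := by rw [conjTranspose_mul]
    _ = (Q * M) * (P * M) := by rw [hP4, hQ4]
    _ = Q * (M * P * M) := by noncomm_ring
    _ = Q * M := by rw [hP1]
  have hMP : M * P = M * Q := by
    have h1 : M * P = (M * Q) * (M * P) := by
      calc M * P = (M * Q * M) * P := by rw [hQ1]
      _ = (M * Q) * (M * P) := by noncomm_ring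
    calc M * P = (M*P)ᴴ := hP3.symm
    _ = ((M * Q) * (M * P))ᴴ := by rw [← h1]
    _ = (M*P)ᴴ * (M*Q)ᴴ := by rw [conjTranspose_mul]
    _ = (M * P) * (M * Q) := by rw [hP3, hQ3]
    _ = M * (P * M) * Q := by noncomm_ring
    _ = M * (Q * M) * Q := by rw [hPMQM]
    _ = M * (Q * M * Q) := by noncomm_ring
    _ = M * Q := by rw [hQ2]
  calc P = P * M * P := hP2.symm
  _ = Q * M * P := by rw [hPMQM]
  _ = Q * (M * P) := by noncomm_ring
  _ = Q * (M * Q) := by rw [hMP]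
  _ = Q * M * Q := by noncomm_ring
  _ = Q := hQ2

lemma sum_fin_lt {r t : ℕ} (htr : t ≤ r) (f : Fin r → ℂ)
    (hf : ∀ l : Fin r, ¬ (l : ℕ) < t → f l = 0) :
    ∑ l, f l = ∑ k : Fin t, f (Fin.castLE htr k) := by
  classical
  have h := Finset.sum_subset
    (Finset.subset_univ (Finset.univ.map ⟨Fin.castLE htr, Fin.castLE_injective htr⟩))
    (f := f) ?_
  · rw [← h, Finset.sum_map]
    rfl
  · intro l _ hl
    apply hf
    intro hlt
    exact hl (Finset.mem_map.mpr ⟨⟨(l:ℕ), hlt⟩, Finset.mem_univ _, by ext; simp⟩)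

lemma SSH_diag {r m2 t : ℕ} (htm : t ≤ m2) (σ : Fin t → ℝ) :
    (Matrix.of fun (i : Fin r) (j : Fin m2) =>
        if h : (i : ℕ) = (j : ℕ) ∧ (i : ℕ) < t then (σ ⟨(i : ℕ), h.2⟩ : ℂ) else 0) *
      (Matrix.of fun (i : Fin r) (j : Fin m2) =>
        if h : (i : ℕ) = (j : ℕ) ∧ (i : ℕ) < t then (σ ⟨(i : ℕ), h.2⟩ : ℂ) else 0)ᴴ
    = Matrix.diagonal (fun l : Fin r =>
        if h : (l : ℕ) < t then ((σ ⟨(l : ℕ), h⟩ : ℂ) ^ 2) else 0) := by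
  ext i j
  rw [Matrix.mul_apply, Matrix.diagonal]
  simp only [conjTranspose_apply, Matrix.of_apply]
  by_cases hij : i = j
  · subst hij
    by_cases hit : (i : ℕ) < t
    · rw [Finset.sum_eq_single (⟨(i : ℕ), lt_of_lt_of_le hit htm⟩ : Fin m2)]
      · simp [hit, sq, Complex.ext_iff]
      · intro k _ hk
        have : ¬ ((i : ℕ) = (k : ℕ) ∧ (i : ℕ) < t) := by
          rintro ⟨h1, -⟩
          exact hk (by ext; simp [← h1])
        simp [this]
      · intro h; exact absurd (Finset.mem_univ _) h
    · have : ∀ k : Fin m2, ¬ ((i : ℕ) = (k : ℕ) ∧ (i : ℕ) < t) := fun k h => hit h.2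
      simp [this, hit]
  · have hval : (i : ℕ) ≠ (j : ℕ) := fun h => hij (Fin.ext h)
    rw [Finset.sum_eq_zero, if_neg hij]
    intro k _
    by_cases h1 : (i : ℕ) = (k : ℕ) ∧ (i : ℕ) < t
    · have : ¬ ((j : ℕ) = (k : ℕ) ∧ (j : ℕ) < t) := by
        rintro ⟨h2, -⟩
        exact hval (h1.1.trans h2.symm)
      simp [this]
    · simp [h1]

def HcM (m : ℕ) : Matrix (Fin (m - 1)) (Fin m) ℂ :=
  (toeplitzD m).map (Complex.ofReal)

lemma HtH_eq (m : ℕ) : HtH m = (HcM m)ᴴ * (HcM m) := by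
  ext i j
  simp only [HtH, HcM, Matrix.map_apply, Matrix.mul_apply, conjTranspose_apply,
    Matrix.map_apply, transpose_apply, Complex.ofReal_sum]
  congr 1
  ext k
  rw [Complex.ofReal_mul, RCLike.star_def, Complex.conj_ofReal]

lemma HtH_psd (m : ℕ) : (HtH m).PosSemidef := by
  rw [HtH_eq]; exact posSemidef_conjTranspose_mul_self _

lemma HcM_mulVec {m : ℕ} (x : Fin m → ℂ) (i : Fin (m - 1))
    (hi : (i : ℕ) < m) (hi1 : (i : ℕ) + 1 < m) :
    ((HcM m) *ᵥ x) i = x ⟨(i : ℕ), hi⟩ - x ⟨(i : ℕ) + 1, hi1⟩ := by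
  set j₁ : Fin m := ⟨(i : ℕ), hi⟩
  set j₂ : Fin m := ⟨(i : ℕ) + 1, hi1⟩
  have hne : j₁ ≠ j₂ := by simp [j₁, j₂, Fin.ext_iff]
  have hfun : ∀ j, HcM m i j * x j =
      (if j = j₁ then x j₁ else 0) + (if j = j₂ then -x j₂ else 0) := by
    intro j
    by_cases h1 : j = j₁
    · subst h1
      simp [HcM, toeplitzD, j₁, hne]
    · by_cases h2 : j = j₂
      · subst h2
        have : ((j₂ : ℕ) ≠ (i : ℕ)) := by simp [j₂]
        simp [HcM, toeplitzD, j₂, this, h1]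
      · have e1 : ((j : ℕ) ≠ (i : ℕ)) := fun h => h1 (Fin.ext h)
        have e2 : ((j : ℕ) ≠ (i : ℕ) + 1) := fun h => h2 (Fin.ext h)
        simp [HcM, toeplitzD, e1, e2, h1, h2]
  rw [Matrix.mulVec, dotProduct]
  simp only [hfun]
  rw [Finset.sum_add_distrib]
  simp [Finset.sum_ite_eq', sub_eq_add_neg]

lemma sum_comp_inj {m k : ℕ} (e : Fin k → Fin m) (he : Function.Injective e)
    (g : Fin m → ℝ) (hg : ∀ j, 0 ≤ g j) : ∑ i, g (e i) ≤ ∑ j, g j := by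
  rw [← Finset.sum_image (g := e) (f := g) (fun x _ y _ h => he h)]
  exact Finset.sum_le_sum_of_subset_of_nonneg (Finset.subset_univ _) (fun j _ _ => hg j)

lemma four_sub_psd (m : ℕ) : ((4 : ℂ) • (1 : Matrix (Fin m) (Fin m) ℂ) - HtH m).PosSemidef := by
  rw [posSemidef_iff_dotProduct_mulVec]
  constructor
  · unfold Matrix.IsHermitian
    rw [conjTranspose_sub, conjTranspose_smul, conjTranspose_one, (HtH_psd m).1.eq]
    norm_num
  · intro x
    set y := (HcM m) *ᵥ x with hy
    have h1 : star x ⬝ᵥ ((4 : ℂ) • (1 : Matrix (Fin m) (Fin m) ℂ) - HtH m) *ᵥ x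
        = ((4 * ∑ j, Complex.normSq (x j) - ∑ i, Complex.normSq (y i) : ℝ) : ℂ) := by
      rw [sub_mulVec, dotProduct_sub, smul_mulVec, one_mulVec, dotProduct_smul]
      have e1 : star x ⬝ᵥ x = ((∑ j, Complex.normSq (x j) : ℝ) : ℂ) := by
        rw [dotProduct]
        push_cast
        refine Finset.sum_congr rfl fun j _ => ?_
        simp [Complex.normSq_eq_conj_mul_self]
      have e2 : star x ⬝ᵥ (HtH m) *ᵥ x = ((∑ i, Complex.normSq (y i) : ℝ) : ℂ) := by
        rw [HtH_eq, ← mulVec_mulVec, dotProduct_mulVec, ← star_mulVec, ← hy]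
        rw [dotProduct]
        push_cast
        refine Finset.sum_congr rfl fun j _ => ?_
        simp [Complex.normSq_eq_conj_mul_self]
      rw [e1, e2, smul_eq_mul]
      push_cast
      ring
    rw [h1]
    rw [Complex.zero_le_real]
    have hb : ∀ i : Fin (m-1), Complex.normSq (y i) ≤
        2 * Complex.normSq (x ⟨(i:ℕ), by omega⟩) + 2 * Complex.normSq (x ⟨(i:ℕ)+1, by omega⟩) := by
      intro i
      have hi : (i:ℕ) < m - 1 := i.2
      rw [hy, HcM_mulVec x i (by omega) (by omega)]
      set a := x ⟨(i:ℕ), by omega⟩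
      set b := x ⟨(i:ℕ)+1, by omega⟩
      have h := Complex.normSq_sub a b
      have h2 : |(a * (starRingEnd ℂ) b).re| ≤ ‖a‖ * ‖b‖ := by
        calc |(a * (starRingEnd ℂ) b).re| ≤ ‖a * (starRingEnd ℂ) b‖ :=
          Complex.abs_re_le_norm _
        _ = ‖a‖ * ‖b‖ := by rw [norm_mul, Complex.norm_conj]
      have h3 := abs_le.mp h2
      nlinarith [Complex.normSq_nonneg a, Complex.normSq_nonneg b, Complex.sq_norm a,
        Complex.sq_norm b, sq_nonneg (‖a‖ - ‖b‖),
        norm_nonneg a, norm_nonneg b]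
    have e1inj : Function.Injective (fun i : Fin (m-1) => (⟨(i:ℕ), by omega⟩ : Fin m)) := by
      intro a b h; simp [Fin.ext_iff] at h ⊢; omega
    have e2inj : Function.Injective (fun i : Fin (m-1) => (⟨(i:ℕ)+1, by omega⟩ : Fin m)) := by
      intro a b h; simp [Fin.ext_iff] at h ⊢; omega
    have s1 := sum_comp_inj _ e1inj (fun j => Complex.normSq (x j)) (fun j => Complex.normSq_nonneg _)
    have s2 := sum_comp_inj _ e2inj (fun j => Complex.normSq (x j)) (fun j => Complex.normSq_nonneg _)
    have := Finset.sum_le_sum (fun i (_ : i ∈ Finset.univ) => hb i)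
    rw [Finset.sum_add_distrib, ← Finset.mul_sum, ← Finset.mul_sum] at this
    beta_reduce at s1 s2 this ⊢
    linarith

lemma Ainv_sub_psd (m : ℕ) (ρ1 : ℝ) (hρ1 : 0 ≤ ρ1) :
    (((1 : Matrix (Fin m) (Fin m) ℂ) + (ρ1 : ℂ) • HtH m)⁻¹
      - ((((1 + 4 * ρ1)⁻¹ : ℝ)) : ℂ) • 1).PosSemidef := by
  set B := HtH m with hBdef
  set A := (1 : Matrix (Fin m) (Fin m) ℂ) + (ρ1 : ℂ) • B with hAdef
  have hb : (0:ℝ) < 1 + 4 * ρ1 := by linarith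
  have hA : A.PosDef := Matrix.PosDef.add_posSemidef Matrix.PosDef.one
    (psd_smul (HtH_psd m) hρ1)
  have hdet : IsUnit A.det := hA.det_pos.ne'.isUnit
  set S := CFC.sqrt B with hSdef
  have hS : S * S = B := CFC.sqrt_mul_sqrt_self B (HtH_psd m).nonneg
  have hSH : Sᴴ = S := (CFC.sqrt_nonneg B).posSemidef.isHermitian.eq
  have key1 : S * ((4 : ℂ) • 1 - B) * S = (4 : ℂ) • B - B * B := by
    have e1 : S * ((4 : ℂ) • 1) * S = (4 : ℂ) • B := by
      rw [mul_smul_comm, smul_mul_assoc, mul_one, hS]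
    have e2 : S * B * S = B * B := by rw [← hS]; noncomm_ring
    rw [mul_sub, sub_mul, e1, e2]
  have key2 : ((4 : ℂ) • B - B * B).PosSemidef := by
    rw [← key1]
    nth_rewrite 1 [← hSH]
    exact (four_sub_psd m).conjTranspose_mul_mul_same S
  have key3 : (((1 + 4 * ρ1 : ℝ)) : ℂ) • A - A * A
      = (ρ1 : ℂ) • ((4 : ℂ) • 1 - B) + (((ρ1 ^ 2 : ℝ)) : ℂ) • ((4 : ℂ) • B - B * B) := by
    rw [hAdef]
    push_cast
    simp only [smul_add, add_mul, mul_add, mul_one, one_mul, smul_smul,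
      mul_smul_comm, smul_mul_assoc, smul_sub]
    module
  have key4 : ((((1 + 4 * ρ1 : ℝ)) : ℂ) • A - A * A).PosSemidef := by
    rw [key3]
    exact (psd_smul (four_sub_psd m) hρ1).add (psd_smul key2 (sq_nonneg ρ1))
  have key5 : (((1 + 4 * ρ1 : ℝ)) : ℂ) • A⁻¹ - 1
      = A⁻¹ * ((((1 + 4 * ρ1 : ℝ)) : ℂ) • A - A * A) * A⁻¹ := by
    rw [mul_sub, sub_mul, mul_smul_comm, smul_mul_assoc]
    rw [show A⁻¹ * A * A⁻¹ = A⁻¹ by rw [A.nonsing_inv_mul hdet, one_mul]]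
    rw [show A⁻¹ * (A * A) * A⁻¹ = 1 by
      calc A⁻¹ * (A * A) * A⁻¹ = (A⁻¹ * A) * (A * A⁻¹) := by noncomm_ring
      _ = 1 := by rw [A.nonsing_inv_mul hdet, A.mul_nonsing_inv hdet, one_mul]]
  have key6 : ((((1 + 4 * ρ1 : ℝ)) : ℂ) • A⁻¹ - 1).PosSemidef := by
    rw [key5]
    nth_rewrite 1 [← hA.isHermitian.inv.eq]
    exact key4.conjTranspose_mul_mul_same A⁻¹
  have final : A⁻¹ - ((((1 + 4 * ρ1)⁻¹ : ℝ)) : ℂ) • 1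
      = ((((1 + 4 * ρ1)⁻¹ : ℝ)) : ℂ) • ((((1 + 4 * ρ1 : ℝ)) : ℂ) • A⁻¹ - 1) := by
    rw [smul_sub, smul_smul]
    congr 2
    rw [← Complex.ofReal_mul, inv_mul_cancel₀ hb.ne']
    norm_num
  rw [final]
  exact psd_smul key6 (by positivity)

lemma udu_mul {r : ℕ} (U : Matrix (Fin r) (Fin r) ℂ) (hU2 : Uᴴ * U = 1)
    (d e : Fin r → ℂ) :
    (U * Matrix.diagonal d * Uᴴ) * (U * Matrix.diagonal e * Uᴴ)
      = U * Matrix.diagonal (fun l => d l * e l) * Uᴴ := by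
  have h : (U * Matrix.diagonal d * Uᴴ) * (U * Matrix.diagonal e * Uᴴ)
      = U * (Matrix.diagonal d * ((Uᴴ * U) * Matrix.diagonal e)) * Uᴴ := by noncomm_ring
  rw [h, hU2, one_mul, Matrix.diagonal_mul_diagonal]

lemma udu_ct {r : ℕ} (U : Matrix (Fin r) (Fin r) ℂ) (d : Fin r → ℂ) :
    (U * Matrix.diagonal d * Uᴴ)ᴴ = U * Matrix.diagonal (star d) * Uᴴ := by
  rw [conjTranspose_mul, conjTranspose_mul, conjTranspose_conjTranspose,
    Matrix.diagonal_conjTranspose, mul_assoc]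

lemma Ainv_trace_bound (m k : ℕ) (ρ1 : ℝ) (hρ1 : 0 ≤ ρ1) (N : Matrix (Fin m) (Fin k) ℂ) :
    0 ≤ ((Nᴴ * (((1 : Matrix (Fin m) (Fin m) ℂ) + (ρ1 : ℂ) • HtH m)⁻¹
        - ((((1 + 4 * ρ1)⁻¹ : ℝ)) : ℂ) • 1) * N).trace).re :=
  psd_trace_re_nonneg ((Ainv_sub_psd m ρ1 hρ1).conjTranspose_mul_mul_same N)

end Aux

/-- descent property of the scaled gradient direction in `X`. -/
theorem descent_direction_X (m1 m2 r t : ℕ)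
    (hm1 : 2 ≤ m1) (hm2 : 0 < m2) (hr : 0 < r)
    (ρ1 : ℝ) (hρ1 : 0 ≤ ρ1)
    (W : Matrix (Fin m1) (Fin m2) ℂ)
    (X : Matrix (Fin m1) (Fin r) ℂ) (Y : Matrix (Fin r) (Fin m2) ℂ)
    (G : Matrix (Fin m1) (Fin r) ℂ)
    (hG : G = (X * Y - W) * Yᴴ + (ρ1 : ℂ) • (HtH m1 * X * Y * Yᴴ))
    (U : Matrix (Fin r) (Fin r) ℂ) (V : Matrix (Fin m2) (Fin m2) ℂ)
    (hU1 : U * Uᴴ = 1) (hU2 : Uᴴ * U = 1)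
    (hV1 : V * Vᴴ = 1) (hV2 : Vᴴ * V = 1)
    (ht0 : 0 < t) (htr : t ≤ r) (htm : t ≤ m2)
    (σ : Fin t → ℝ) (hσpos : ∀ i, 0 < σ i)
    (hσanti : ∀ i j : Fin t, i ≤ j → σ j ≤ σ i)
    (hY : Y = U * (Matrix.of fun (i : Fin r) (j : Fin m2) =>
        if h : (i : ℕ) = (j : ℕ) ∧ (i : ℕ) < t then (σ ⟨(i : ℕ), h.2⟩ : ℂ) else 0) * Vᴴ)
    (P : Matrix (Fin r) (Fin r) ℂ)
    (hP1 : (Y * Yᴴ) * P * (Y * Yᴴ) = Y * Yᴴ) (hP2 : P * (Y * Yᴴ) * P = P)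
    (hP3 : ((Y * Yᴴ) * P)ᴴ = (Y * Yᴴ) * P) (hP4 : (P * (Y * Yᴴ))ᴴ = P * (Y * Yᴴ))
    (d : Matrix (Fin m1) (Fin r) ℂ)
    (hd : d = -(((1 : Matrix (Fin m1) (Fin m1) ℂ) + (ρ1 : ℂ) • HtH m1)⁻¹ * G * P)) :
    ((Gᴴ * d).trace).re ≤
      -(1 / ((1 + 4 * ρ1) * σ ⟨0, ht0⟩ ^ 2)) *
        frobSqC (G * U.submatrix id (Fin.castLE htr)) := by
  classical
  have hb : (0:ℝ) < 1 + 4 * ρ1 := by linarith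
  have hσ0pos : 0 < σ ⟨0, ht0⟩ := hσpos _
  -- diagonal functions
  set f : Fin r → ℂ := fun l => if h : (l:ℕ) < t then ((σ ⟨(l:ℕ), h⟩ : ℂ)) ^ 2 else 0
    with hfdef
  set p : Fin r → ℂ := fun l => if h : (l:ℕ) < t then (((σ ⟨(l:ℕ), h⟩ : ℂ)) ^ 2)⁻¹ else 0
    with hpdef
  -- decomposition of Y Yᴴ
  obtain ⟨S, hSdef, hYS⟩ :
      ∃ S : Matrix (Fin r) (Fin m2) ℂ, S = (Matrix.of fun (i : Fin r) (j : Fin m2) =>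
        if h : (i : ℕ) = (j : ℕ) ∧ (i : ℕ) < t then (σ ⟨(i : ℕ), h.2⟩ : ℂ) else 0)
        ∧ Y = U * S * Vᴴ := ⟨_, rfl, hY⟩
  have hSSH : S * Sᴴ = Matrix.diagonal f := by
    rw [hSdef, hfdef]
    exact SSH_diag htm σ
  have hM : Y * Yᴴ = U * Matrix.diagonal f * Uᴴ := by
    rw [hYS, conjTranspose_mul, conjTranspose_mul, conjTranspose_conjTranspose]
    rw [show U * S * Vᴴ * (V * (Sᴴ * Uᴴ)) = U * (S * ((Vᴴ * V) * Sᴴ)) * Uᴴ by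
      simp only [Matrix.mul_assoc]]
    rw [hV2, Matrix.one_mul, hSSH]
  -- pointwise identities
  have hσne : ∀ (l : Fin r) (h : (l:ℕ) < t), ((σ ⟨(l:ℕ), h⟩ : ℂ)) ^ 2 ≠ 0 := by
    intro l h
    exact pow_ne_zero _ (by exact_mod_cast (hσpos ⟨(l:ℕ), h⟩).ne')
  have hfp : ∀ l, f l * p l = if (l:ℕ) < t then 1 else 0 := by
    intro l
    by_cases h : (l:ℕ) < t
    · simp only [hfdef, hpdef, dif_pos h, if_pos h]
      exact mul_inv_cancel₀ (hσne l h)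
    · simp [hfdef, hpdef, dif_neg h, if_neg h]
  have hpf : ∀ l, p l * f l = if (l:ℕ) < t then 1 else 0 := by
    intro l; rw [mul_comm]; exact hfp l
  have hf0 : ∀ l : Fin r, ¬ (l:ℕ) < t → f l = 0 := by
    intro l h; simp only [hfdef]; rw [dif_neg h]
  have hp0 : ∀ l : Fin r, ¬ (l:ℕ) < t → p l = 0 := by
    intro l h; simp only [hpdef]; rw [dif_neg h]
  -- Q satisfies the Penrose equations
  set Q := U * Matrix.diagonal p * Uᴴ with hQdef
  have mul3 : ∀ a b c : Fin r → ℂ,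
      (U * Matrix.diagonal a * Uᴴ) * (U * Matrix.diagonal b * Uᴴ) * (U * Matrix.diagonal c * Uᴴ)
      = U * Matrix.diagonal (fun l => a l * b l * c l) * Uᴴ := by
    intro a b c
    rw [udu_mul U hU2, udu_mul U hU2]
  have hfpf : (fun l => f l * p l * f l) = f := by
    funext l
    rw [hfp l]
    by_cases h : (l:ℕ) < t
    · simp [h]
    · simp [h, hf0 l h]
  have hpfp : (fun l => p l * f l * p l) = p := by
    funext l
    rw [hpf l]
    by_cases h : (l:ℕ) < t
    · simp [h]
    · simp [h, hp0 l h]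
  have hQ1 : (Y * Yᴴ) * Q * (Y * Yᴴ) = Y * Yᴴ := by rw [hM, hQdef, mul3, hfpf]
  have hQ2 : Q * (Y * Yᴴ) * Q = Q := by rw [hM, hQdef, mul3, hpfp]
  have hstar_fp : star (fun l => f l * p l) = (fun l => f l * p l) := by
    funext l
    rw [Pi.star_apply, hfp l]
    by_cases h : (l:ℕ) < t <;> simp [h]
  have hstar_pf : star (fun l => p l * f l) = (fun l => p l * f l) := by
    funext l
    rw [Pi.star_apply, hpf l]
    by_cases h : (l:ℕ) < t <;> simp [h]
  have hQ3 : ((Y * Yᴴ) * Q)ᴴ = (Y * Yᴴ) * Q := by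
    rw [hM, hQdef, udu_mul U hU2, udu_ct, hstar_fp]
  have hQ4 : (Q * (Y * Yᴴ))ᴴ = Q * (Y * Yᴴ) := by
    rw [hM, hQdef, udu_mul U hU2, udu_ct, hstar_pf]
  have hPQ : P = Q := penrose_unique (Y * Yᴴ) P Q hP1 hP2 hP3 hP4 hQ1 hQ2 hQ3 hQ4
  -- Q = R Rᴴ
  set U1 := U.submatrix id (Fin.castLE htr) with hU1def
  set R : Matrix (Fin r) (Fin t) ℂ :=
    Matrix.of (fun j k => U j (Fin.castLE htr k) * (((σ k : ℝ))⁻¹ : ℂ)) with hRdef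
  have hQR : Q = R * Rᴴ := by
    rw [hQdef]
    ext i j
    rw [Matrix.mul_apply, Matrix.mul_apply]
    simp only [Matrix.mul_diagonal, conjTranspose_apply, Matrix.of_apply, hRdef]
    rw [sum_fin_lt htr _ (fun l hl => by rw [hp0 l hl]; ring)]
    refine Finset.sum_congr rfl fun k _ => ?_
    have hk : ((Fin.castLE htr k : Fin r) : ℕ) < t := by simpa using k.2
    simp only [hpdef, dif_pos hk]
    have : (⟨((Fin.castLE htr k : Fin r) : ℕ), hk⟩ : Fin t) = k := by ext; simp
    rw [this]
    simp only [star_mul', Complex.star_def, ← Complex.ofReal_inv, Complex.conj_ofReal]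
    push_cast
    ring
  -- the direction matrix N
  set A := (1 : Matrix (Fin m1) (Fin m1) ℂ) + (ρ1 : ℂ) • HtH m1 with hAdef
  set N := G * R with hNdef
  have hNval : ∀ i k, N i k = (G * U1) i k * (((σ k : ℝ))⁻¹ : ℂ) := by
    intro i k
    rw [hNdef, hU1def, Matrix.mul_apply, Matrix.mul_apply, Finset.sum_mul]
    refine Finset.sum_congr rfl fun j _ => ?_
    simp only [hRdef, Matrix.of_apply, Matrix.submatrix_apply, id]
    ring
  -- trace identity
  have htr1 : (Gᴴ * d).trace = -((Nᴴ * A⁻¹ * N).trace) := by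
    rw [hd, hPQ, hQR, Matrix.mul_neg, Matrix.trace_neg]
    rw [show Gᴴ * (A⁻¹ * G * (R * Rᴴ)) = (Gᴴ * (A⁻¹ * G) * R) * Rᴴ by
      simp only [Matrix.mul_assoc]]
    rw [Matrix.trace_mul_comm]
    rw [show Rᴴ * (Gᴴ * (A⁻¹ * G) * R) = Nᴴ * A⁻¹ * N by
      rw [hNdef, conjTranspose_mul]; simp only [Matrix.mul_assoc]]
  set c : ℝ := (1 + 4 * ρ1)⁻¹ with hcdef
  have hsplit : Nᴴ * A⁻¹ * N = Nᴴ * (A⁻¹ - ((c : ℝ) : ℂ) • 1) * N + ((c : ℝ) : ℂ) • (Nᴴ * N) := by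
    have hAi : A⁻¹ = (A⁻¹ - ((c : ℝ) : ℂ) • 1) + ((c : ℝ) : ℂ) • 1 := by abel
    nth_rewrite 1 [hAi]
    rw [Matrix.mul_add, Matrix.add_mul]
    rw [show Nᴴ * (((c : ℝ) : ℂ) • (1 : Matrix (Fin m1) (Fin m1) ℂ)) * N
        = ((c : ℝ) : ℂ) • (Nᴴ * N) by
      rw [Matrix.mul_smul, Matrix.mul_one, Matrix.smul_mul]]
  have hpsd1 : 0 ≤ ((Nᴴ * (A⁻¹ - ((c : ℝ) : ℂ) • 1) * N).trace).re :=
    Ainv_trace_bound m1 t ρ1 hρ1 N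
  have htrNN : ((Nᴴ * N).trace) = ((∑ i, ∑ k, Complex.normSq (N i k) : ℝ) : ℂ) := by
    rw [Matrix.trace]
    simp only [Matrix.diag, Matrix.mul_apply, conjTranspose_apply]
    push_cast
    rw [Finset.sum_comm]
    refine Finset.sum_congr rfl fun i _ => Finset.sum_congr rfl fun k _ => ?_
    simp [Complex.normSq_eq_conj_mul_self]
  have hlow : (σ ⟨0, ht0⟩ ^ 2)⁻¹ * frobSqC (G * U1) ≤ ∑ i, ∑ k, Complex.normSq (N i k) := by
    rw [frobSqC, Finset.mul_sum]
    refine Finset.sum_le_sum fun i _ => ?_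
    rw [Finset.mul_sum]
    refine Finset.sum_le_sum fun k _ => ?_
    rw [hNval i k, Complex.normSq_mul, Complex.sq_norm, ← Complex.ofReal_inv,
      Complex.normSq_ofReal]
    have h1 : σ k ≤ σ ⟨0, ht0⟩ := hσanti ⟨0, ht0⟩ k (by simp [Fin.le_def])
    have h2 : (σ ⟨0, ht0⟩ ^ 2)⁻¹ ≤ (σ k)⁻¹ * (σ k)⁻¹ := by
      have hk := hσpos k
      have h3 : (σ k)⁻¹ * (σ k)⁻¹ = (σ k ^ 2)⁻¹ := by rw [← mul_inv, sq]
      rw [h3]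
      apply inv_anti₀ (by positivity)
      nlinarith
    calc (σ ⟨0, ht0⟩ ^ 2)⁻¹ * Complex.normSq ((G * U1) i k)
        ≤ ((σ k)⁻¹ * (σ k)⁻¹) * Complex.normSq ((G * U1) i k) := by
          exact mul_le_mul_of_nonneg_right h2 (Complex.normSq_nonneg _)
      _ = Complex.normSq ((G * U1) i k) * ((σ k)⁻¹ * (σ k)⁻¹) := by ring
  -- finish
  have hre : ((Gᴴ * d).trace).re
      = -(((Nᴴ * (A⁻¹ - ((c : ℝ) : ℂ) • 1) * N).trace).re
          + c * (∑ i, ∑ k, Complex.normSq (N i k))) := by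
    rw [htr1, hsplit, Matrix.trace_add, Matrix.trace_smul, htrNN]
    simp [Complex.add_re, Complex.neg_re, smul_eq_mul, Complex.mul_re]
  rw [hre]
  have hfrob_eq : -(1 / ((1 + 4 * ρ1) * σ ⟨0, ht0⟩ ^ 2)) * frobSqC (G * U1)
      = -(c * ((σ ⟨0, ht0⟩ ^ 2)⁻¹ * frobSqC (G * U1))) := by
    rw [hcdef]
    field_simp
  rw [hfrob_eq]
  have hc0 : 0 ≤ c := by rw [hcdef]; positivity
  have := mul_le_mul_of_nonneg_left hlow hc0
  linarith
end
end

section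
/- Let m1, m2, r, s be positive integers with m1 ≥ 2, let ρ1 ≥ 0, let H be the real (m1−1)×m1 Toeplitz matrix with ones on the diagonal and minus ones on the first superdiagonal, H_{ρ1} = I_{m1} + ρ1 Hᵀ H, and W ∈ ℂ^{m1×m2}. Let X ∈ ℂ^{m1×r} and Y ∈ ℂ^{r×m2}, and suppose X = U S V* is a singular value decomposition with U, V unitary, positive singular values σ_1 ≥ … ≥ σ_s > 0, and V_1 the first s columns of V. Let G = X*(XY − W) + ρ1 X* Hᵀ H X Y, let Q satisfy the four Penrose equations for X* H_{ρ1} X, and set d = −Q G. Then ‖d‖_F² ≤ (1/σ_s⁴) · ‖V_1* G‖_F². -/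
open Matrix Complex BigOperators

noncomputable section

namespace DirYAux

def φ {a b : ℕ} (M : Matrix (Fin a) (Fin b) ℂ) : EuclideanSpace ℂ (Fin a × Fin b) :=
  WithLp.toLp 2 (fun p : Fin a × Fin b => M p.1 p.2)

def T {a b : ℕ} (A B : Matrix (Fin a) (Fin b) ℂ) : ℂ := Matrix.trace (Aᴴ * B)

variable {a b c n : ℕ}

lemma T_inner (A B : Matrix (Fin a) (Fin b) ℂ) : T A B = inner ℂ (φ A) (φ B) := by
  simp only [T, Matrix.trace, Matrix.diag, Matrix.mul_apply, Matrix.conjTranspose_apply,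
    PiLp.inner_apply, RCLike.inner_apply, Fintype.sum_prod_type, φ, PiLp.toLp_apply]
  rw [Finset.sum_comm]
  exact Finset.sum_congr rfl fun _ _ => Finset.sum_congr rfl fun _ _ => mul_comm _ _

lemma T_adj (C : Matrix (Fin c) (Fin a) ℂ) (A : Matrix (Fin a) (Fin b) ℂ)
    (B : Matrix (Fin c) (Fin b) ℂ) : T (C * A) B = T A (Cᴴ * B) := by
  simp [T, Matrix.conjTranspose_mul, Matrix.mul_assoc]

lemma frob_eq (M : Matrix (Fin a) (Fin b) ℂ) : frobSqC M = ‖φ M‖ ^ 2 := by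
  rw [EuclideanSpace.norm_eq, Real.sq_sqrt (by positivity)]
  simp [frobSqC, φ, Fintype.sum_prod_type]

lemma re_T_self (M : Matrix (Fin a) (Fin b) ℂ) : (T M M).re = frobSqC M := by
  rw [T_inner, frob_eq]
  exact inner_self_eq_norm_sq (𝕜 := ℂ) (φ M)

lemma frob_nonneg (M : Matrix (Fin a) (Fin b) ℂ) : 0 ≤ frobSqC M := by
  rw [frob_eq]; positivity

lemma frob_mul_left (C : Matrix (Fin c) (Fin a) ℂ) (hC : Cᴴ * C = 1)
    (W : Matrix (Fin a) (Fin b) ℂ) : frobSqC (C * W) = frobSqC W := by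
  rw [← re_T_self, T_adj, ← Matrix.mul_assoc, hC, Matrix.one_mul, re_T_self]

lemma norm_mul_left (C : Matrix (Fin c) (Fin a) ℂ) (hC : Cᴴ * C = 1)
    (W : Matrix (Fin a) (Fin b) ℂ) : ‖φ (C * W)‖ = ‖φ W‖ := by
  have h := frob_mul_left C hC W
  rw [frob_eq, frob_eq] at h
  rw [← Real.sqrt_sq (norm_nonneg _), h, Real.sqrt_sq (norm_nonneg _)]

lemma sum_restrict {s n : ℕ} (hsn : s ≤ n) {β : Type*} [AddCommMonoid β] (g : Fin n → β)
    (hg : ∀ k : Fin n, s ≤ (k : ℕ) → g k = 0) :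
    ∑ k, g k = ∑ i : Fin s, g (Fin.castLE hsn i) := by
  classical
  have he : Function.Injective (Fin.castLE hsn) := Fin.castLE_injective hsn
  rw [show (∑ i : Fin s, g (Fin.castLE hsn i)) =
      ∑ k ∈ Finset.univ.map ⟨Fin.castLE hsn, he⟩, g k by rw [Finset.sum_map]; rfl]
  symm
  apply Finset.sum_subset (Finset.subset_univ _)
  intro x _ hx
  apply hg
  by_contra h
  push_neg at h
  exact hx (Finset.mem_map.mpr ⟨⟨(x : ℕ), h⟩, Finset.mem_univ _, rfl⟩)

lemma submatrix_mul_id (f : Fin c → Fin a) (A : Matrix (Fin a) (Fin n) ℂ)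
    (B : Matrix (Fin n) (Fin b) ℂ) : (A.submatrix f id) * B = (A * B).submatrix f id := by
  ext i j
  simp [Matrix.mul_apply]

lemma norm_eq_of_frob {a b c d : ℕ} (A : Matrix (Fin a) (Fin b) ℂ)
    (B : Matrix (Fin c) (Fin d) ℂ) (h : frobSqC A = frobSqC B) : ‖φ A‖ = ‖φ B‖ := by
  rw [frob_eq, frob_eq] at h
  rw [← Real.sqrt_sq (norm_nonneg (φ A)), h, Real.sqrt_sq (norm_nonneg (φ B))]

lemma re_T_le {a b : ℕ} (A B : Matrix (Fin a) (Fin b) ℂ) :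
    (T A B).re ≤ ‖φ A‖ * ‖φ B‖ := by
  have h := re_inner_le_norm (𝕜 := ℂ) (φ A) (φ B)
  rw [← T_inner] at h
  simpa [RCLike.re_to_complex] using h

end DirYAux

set_option maxHeartbeats 2000000 in
open DirYAux in
/-- Frobenius norm bound for the scaled gradient direction in `Y`. -/
theorem direction_Y_norm_bound (m1 m2 r s : ℕ)
    (hm1 : 2 ≤ m1) (hm2 : 0 < m2) (hr : 0 < r) (hs : 0 < s)
    (ρ1 : ℝ) (hρ1 : 0 ≤ ρ1)
    (W : Matrix (Fin m1) (Fin m2) ℂ)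
    (X : Matrix (Fin m1) (Fin r) ℂ) (Y : Matrix (Fin r) (Fin m2) ℂ)
    (G : Matrix (Fin r) (Fin m2) ℂ)
    (hG : G = Xᴴ * (X * Y - W) + (ρ1 : ℂ) • (Xᴴ * HtH m1 * X * Y))
    (U : Matrix (Fin m1) (Fin m1) ℂ) (V : Matrix (Fin r) (Fin r) ℂ)
    (hU1 : U * Uᴴ = 1) (hU2 : Uᴴ * U = 1)
    (hV1 : V * Vᴴ = 1) (hV2 : Vᴴ * V = 1)
    (hsm : s ≤ m1) (hsr : s ≤ r)
    (σ : Fin s → ℝ) (hσpos : ∀ i, 0 < σ i)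
    (hσanti : ∀ i j : Fin s, i ≤ j → σ j ≤ σ i)
    (hX : X = U * (Matrix.of fun (i : Fin m1) (j : Fin r) =>
        if h : (i : ℕ) = (j : ℕ) ∧ (i : ℕ) < s then (σ ⟨(i : ℕ), h.2⟩ : ℂ) else 0) * Vᴴ)
    (Q : Matrix (Fin r) (Fin r) ℂ)
    (M : Matrix (Fin r) (Fin r) ℂ)
    (hM : M = Xᴴ * ((1 : Matrix (Fin m1) (Fin m1) ℂ) + (ρ1 : ℂ) • HtH m1) * X)
    (hQ1 : M * Q * M = M) (hQ2 : Q * M * Q = Q)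
    (hQ3 : (M * Q)ᴴ = M * Q) (hQ4 : (Q * M)ᴴ = Q * M)
    (d : Matrix (Fin r) (Fin m2) ℂ)
    (hd : d = -(Q * G)) :
    frobSqC d ≤
      (1 / σ ⟨s - 1, by omega⟩ ^ 4) *
        frobSqC ((V.submatrix id (Fin.castLE hsr))ᴴ * G) := by
  classical
  set S : Matrix (Fin m1) (Fin r) ℂ := Matrix.of fun (i : Fin m1) (j : Fin r) =>
      if h : (i : ℕ) = (j : ℕ) ∧ (i : ℕ) < s then (σ ⟨(i : ℕ), h.2⟩ : ℂ) else 0 with hSdef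
  set A : Matrix (Fin m1) (Fin m1) ℂ :=
      (1 : Matrix (Fin m1) (Fin m1) ℂ) + (ρ1 : ℂ) • HtH m1 with hAdef
  set V₁ : Matrix (Fin r) (Fin s) ℂ := V.submatrix id (Fin.castLE hsr) with hV₁def
  set Hc : Matrix (Fin (m1 - 1)) (Fin m1) ℂ := (toeplitzD m1).map Complex.ofReal with hHcdef
  set u : Matrix (Fin r) (Fin m2) ℂ := Q * G with hudef
  set P : Matrix (Fin r) (Fin r) ℂ := M * Q with hPdef
  set Z : Matrix (Fin s) (Fin m2) ℂ := V₁ᴴ * G with hZdef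
  have hss : s - 1 < s := by omega
  set σs : ℝ := σ ⟨s - 1, hss⟩ with hσsdef
  have hσs0 : 0 < σs := hσpos _
  -- basic structure facts
  have hXH : Xᴴ = V * (Sᴴ * Uᴴ) := by
    rw [hX]; simp [Matrix.conjTranspose_mul, Matrix.mul_assoc]
  have hHc : HtH m1 = Hcᴴ * Hc := by
    ext i j
    simp only [HtH, hHcdef, Matrix.mul_apply, Matrix.map_apply, Matrix.conjTranspose_apply,
      Matrix.transpose_apply, Complex.conj_ofReal]
    push_cast
    simp [RCLike.star_def, Complex.conj_ofReal]
  have hAherm : Aᴴ = A := by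
    rw [hAdef, hHc]
    simp [Matrix.conjTranspose_add, Matrix.conjTranspose_smul, Matrix.conjTranspose_mul,
      Complex.conj_ofReal, Matrix.mul_assoc]
  have hMherm : Mᴴ = M := by
    rw [hM]
    simp only [Matrix.conjTranspose_mul, Matrix.conjTranspose_conjTranspose, hAherm]
    rw [Matrix.mul_assoc]
  have hV₁H : V₁ᴴ = Vᴴ.submatrix (Fin.castLE hsr) id := by
    rw [hV₁def]; rfl
  have hV11 : V₁ᴴ * V₁ = 1 := by
    ext i j
    have h2 : (Vᴴ * V) (Fin.castLE hsr i) (Fin.castLE hsr j)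
        = (1 : Matrix (Fin r) (Fin r) ℂ) (Fin.castLE hsr i) (Fin.castLE hsr j) := by rw [hV2]
    rw [Matrix.mul_apply] at h2
    rw [Matrix.mul_apply]
    simp only [hV₁H, hV₁def, Matrix.conjTranspose_submatrix, Matrix.submatrix_apply, id_eq]
    rw [h2]
    simp only [Matrix.one_apply]
    by_cases h : i = j
    · simp [h]
    · rw [if_neg h, if_neg (fun hc => h (Fin.castLE_injective hsr hc))]
  have hSrow : ∀ (k : Fin r) (b : Fin m1), s ≤ (k : ℕ) → (Sᴴ * Uᴴ) k b = 0 := by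
    intro k b hk
    rw [Matrix.mul_apply]
    apply Finset.sum_eq_zero
    intro l _
    have hz : S l k = 0 := by
      rw [hSdef]
      simp only [Matrix.of_apply]
      rw [dif_neg]
      rintro ⟨h1, h2⟩
      omega
    simp [Matrix.conjTranspose_apply, hz]
  have hRan : V₁ * V₁ᴴ * Xᴴ = Xᴴ := by
    rw [Matrix.mul_assoc, hXH, hV₁H, submatrix_mul_id, ← Matrix.mul_assoc Vᴴ V _, hV2,
      Matrix.one_mul]
    ext a b
    rw [Matrix.mul_apply, Matrix.mul_apply]
    simp only [hV₁def, Matrix.submatrix_apply, id_eq]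
    symm
    apply sum_restrict hsr (fun k => V a k * (Sᴴ * Uᴴ) k b)
    intro k hk
    show V a k * (Sᴴ * Uᴴ) k b = 0
    rw [hSrow k b hk, mul_zero]
  have hMw : ∀ w : Matrix (Fin r) (Fin m2) ℂ, M * w = Xᴴ * (A * (X * w)) := by
    intro w; rw [hM, Matrix.mul_assoc, Matrix.mul_assoc]
  have hfix : ∀ c : Matrix (Fin m1) (Fin m2) ℂ, V₁ * (V₁ᴴ * (Xᴴ * c)) = Xᴴ * c := by
    intro c
    rw [← Matrix.mul_assoc, ← Matrix.mul_assoc, hRan]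
  have hfixM : ∀ w : Matrix (Fin r) (Fin m2) ℂ, V₁ * (V₁ᴴ * (M * w)) = M * w := by
    intro w; rw [hMw w]; exact hfix _
  -- u and P*u lie in the range of V₁
  have hQM : Q * M = M * Qᴴ := by
    conv_lhs => rw [← hQ4]
    rw [Matrix.conjTranspose_mul, hMherm]
  have hu2 : u = M * (Qᴴ * u) := by
    calc u = (Q * M * Q) * G := by rw [hQ2]
    _ = (Q * M) * u := by rw [Matrix.mul_assoc, ← hudef]
    _ = M * (Qᴴ * u) := by rw [hQM, Matrix.mul_assoc]
  have hufix : V₁ * (V₁ᴴ * u) = u := by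
    have h := hfixM (Qᴴ * u)
    rw [← hu2] at h
    exact h
  have hPu : P * u = M * (Q * u) := by rw [hPdef, Matrix.mul_assoc]
  have hPufix : V₁ * (V₁ᴴ * (P * u)) = P * u := by
    rw [hPu]; exact hfixM _
  -- norms
  set au : ℝ := ‖φ u‖ with haudef
  set az : ℝ := ‖φ Z‖ with hazdef
  set ap : ℝ := ‖φ (P * u)‖ with hapdef
  have hfu : frobSqC (V₁ᴴ * u) = frobSqC u := by
    conv_rhs => rw [← hufix]
    rw [frob_mul_left V₁ hV11]
  have hfPu : frobSqC (V₁ᴴ * (P * u)) = frobSqC (P * u) := by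
    conv_rhs => rw [← hPufix]
    rw [frob_mul_left V₁ hV11]
  -- key singular value inequality
  have hkey : ∀ w : Matrix (Fin r) (Fin m2) ℂ,
      σs ^ 2 * frobSqC (w.submatrix (Fin.castLE hsr) id) ≤ frobSqC (S * w) := by
    intro w
    have hSw : ∀ (i : Fin m1) (j : Fin m2), (S * w) i j =
        if h : (i : ℕ) < s then (σ ⟨(i : ℕ), h⟩ : ℂ) * w (Fin.castLE hsr ⟨(i : ℕ), h⟩) j
        else 0 := by
      intro i j
      rw [Matrix.mul_apply]
      by_cases h : (i : ℕ) < s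
      · rw [dif_pos h]
        rw [Finset.sum_eq_single (Fin.castLE hsr ⟨(i : ℕ), h⟩)]
        · congr 1
          rw [hSdef]
          simp only [Matrix.of_apply]
          rw [dif_pos ⟨rfl, h⟩]
        · intro k _ hk
          have hz : S i k = 0 := by
            rw [hSdef]; simp only [Matrix.of_apply]
            rw [dif_neg]
            rintro ⟨h1, h2⟩
            exact hk (Fin.ext h1.symm)
          rw [hz, zero_mul]
        · intro hmem; exact absurd (Finset.mem_univ _) hmem
      · rw [dif_neg h]
        apply Finset.sum_eq_zero
        intro k _
        have hz : S i k = 0 := by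
          rw [hSdef]; simp only [Matrix.of_apply]
          rw [dif_neg]
          rintro ⟨h1, h2⟩
          exact h h2
        rw [hz, zero_mul]
    have hg0 : ∀ i : Fin m1, s ≤ (i : ℕ) →
        (∑ j, ‖(S * w) i j‖ ^ 2) = 0 := by
      intro i hi
      apply Finset.sum_eq_zero
      intro j _
      rw [hSw i j, dif_neg (by omega)]
      simp
    have hsum : frobSqC (S * w)
        = ∑ i : Fin s, ∑ j, ‖(S * w) (Fin.castLE hsm i) j‖ ^ 2 := by
      rw [frobSqC]
      exact sum_restrict hsm _ hg0
    have hterm : ∀ (i : Fin s) (j : Fin m2),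
        ‖(S * w) (Fin.castLE hsm i) j‖ ^ 2
          = (σ i) ^ 2 * ‖w (Fin.castLE hsr i) j‖ ^ 2 := by
      intro i j
      rw [hSw, dif_pos (by simpa using i.isLt)]
      have hi : (⟨((Fin.castLE hsm i : Fin m1) : ℕ), by simpa using i.isLt⟩ : Fin s) = i := by
        apply Fin.ext; simp
      rw [hi]
      rw [norm_mul, mul_pow, Complex.norm_real, Real.norm_eq_abs, abs_of_pos (hσpos i)]
    rw [hsum]
    have hrw : frobSqC (w.submatrix (Fin.castLE hsr) id)
        = ∑ i : Fin s, ∑ j, ‖w (Fin.castLE hsr i) j‖ ^ 2 := by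
      rw [frobSqC]; rfl
    rw [hrw, Finset.mul_sum]
    apply Finset.sum_le_sum
    intro i _
    have h1 : σs ≤ σ i := by
      apply hσanti
      rw [Fin.le_def]
      simp only []
      omega
    calc σs ^ 2 * ∑ j, ‖w (Fin.castLE hsr i) j‖ ^ 2
        ≤ (σ i) ^ 2 * ∑ j, ‖w (Fin.castLE hsr i) j‖ ^ 2 := by
          apply mul_le_mul_of_nonneg_right (pow_le_pow_left₀ hσs0.le h1 2) (by positivity)
    _ = ∑ j, ‖(S * w) (Fin.castLE hsm i) j‖ ^ 2 := by
          rw [Finset.mul_sum]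
          exact Finset.sum_congr rfl fun j _ => (hterm i j).symm
  -- lower bound
  have hVu : V₁ᴴ * u = (Vᴴ * u).submatrix (Fin.castLE hsr) id := by
    rw [hV₁H]; exact submatrix_mul_id _ _ _
  have hlow : σs ^ 2 * au ^ 2 ≤ (T u (M * u)).re := by
    have e1 : T u (M * u) = T (X * u) (A * (X * u)) := by
      rw [hMw u, ← T_adj]
    have e2 : A * (X * u) = X * u + (ρ1 : ℂ) • (HtH m1 * (X * u)) := by
      rw [hAdef, Matrix.add_mul, Matrix.one_mul, Matrix.smul_mul]
    have e3 : T (X * u) (A * (X * u))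
        = T (X * u) (X * u) + (ρ1 : ℂ) * T (X * u) (HtH m1 * (X * u)) := by
      rw [e2]
      simp [T, Matrix.mul_add, Matrix.mul_smul, Matrix.trace_add, Matrix.trace_smul,
        smul_eq_mul]
    have e4 : 0 ≤ (T (X * u) (HtH m1 * (X * u))).re := by
      rw [hHc, Matrix.mul_assoc, ← T_adj, re_T_self]
      exact frob_nonneg _
    have e5 : (T (X * u) (X * u)).re = frobSqC (X * u) := re_T_self _
    have e6 : σs ^ 2 * au ^ 2 ≤ frobSqC (X * u) := by
      have hXu : X * u = U * (S * (Vᴴ * u)) := by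
        rw [hX, Matrix.mul_assoc, Matrix.mul_assoc]
      rw [hXu, frob_mul_left U hU2]
      have := hkey (Vᴴ * u)
      rw [← hVu, hfu, frob_eq] at this
      exact this
    rw [e1, e3]
    have : (T (X * u) (X * u) + (ρ1 : ℂ) * T (X * u) (HtH m1 * (X * u))).re
        = (T (X * u) (X * u)).re + ρ1 * (T (X * u) (HtH m1 * (X * u))).re := by
      rw [Complex.add_re, _root_.Complex.re_ofReal_mul]
    rw [this, e5]
    linarith [e6, mul_nonneg hρ1 e4]
  -- upper bound
  have hP3 : Pᴴ = P := hQ3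
  have hnw : ‖φ (V₁ᴴ * (P * u))‖ = ap := norm_eq_of_frob _ _ hfPu
  have hup : (T u (M * u)).re ≤ ap * az := by
    have e1 : M * u = P * G := by rw [hudef, ← Matrix.mul_assoc, ← hPdef]
    have e2 : T u (M * u) = T (V₁ᴴ * (P * u)) Z := by
      rw [e1, ← hP3, ← T_adj, hP3]
      conv_lhs => rw [← hPufix]
      rw [T_adj, hZdef]
    rw [e2]
    calc (T (V₁ᴴ * (P * u)) Z).re ≤ ‖φ (V₁ᴴ * (P * u))‖ * ‖φ Z‖ := re_T_le _ _
    _ = ap * az := by rw [hnw]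
  have hPP : P * P = P := by
    rw [hPdef, Matrix.mul_assoc M Q (M * Q), ← Matrix.mul_assoc Q M Q, hQ2]
  have hap : ap ≤ au := by
    have e1 : T (P * u) (P * u) = T u (P * u) := by
      rw [T_adj, hP3, ← Matrix.mul_assoc, hPP]
    have e2 : ap ^ 2 ≤ au * ap := by
      rw [hapdef, ← frob_eq, ← re_T_self, e1]
      exact re_T_le u (P * u)
    rcases eq_or_lt_of_le (norm_nonneg (φ (P * u))) with h | h
    · rw [hapdef, ← h, haudef]; positivity
    · have h' : 0 < ap := by rw [hapdef]; exact h
      nlinarith [e2, h']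
  -- combine
  have hchain : σs ^ 2 * au ^ 2 ≤ au * az := le_trans hlow (le_trans hup
    (mul_le_mul_of_nonneg_right hap (norm_nonneg _)))
  have hdu : frobSqC d = au ^ 2 := by
    rw [hd, haudef, ← frob_eq, hudef]
    simp [frobSqC, Matrix.neg_apply]
  have hZ2 : frobSqC Z = az ^ 2 := frob_eq Z
  show frobSqC d ≤ 1 / σs ^ 4 * frobSqC Z
  rw [hdu, hZ2]
  rcases eq_or_lt_of_le (norm_nonneg (φ u)) with h | h
  · have h0 : au = 0 := by rw [haudef, ← h]
    rw [h0]
    have hge : (0:ℝ) ≤ 1 / σs ^ 4 * az ^ 2 := by positivity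
    simpa using hge
  · have hau : 0 < au := by rw [haudef]; exact h
    have h2 : σs ^ 2 * au ≤ az := by nlinarith [hchain, hau]
    have h3 : (σs ^ 2 * au) ^ 2 ≤ az ^ 2 :=
      pow_le_pow_left₀ (by positivity) h2 2
    rw [div_mul_eq_mul_div, one_mul, le_div_iff₀ (pow_pos hσs0 4)]
    nlinarith [h3]
end
end

section
/- Let m1, m2, r, p be positive integers, ρ1 ≥ 0, let H be a real p×m1 matrix, H_{ρ1} = I_{m1} + ρ1 Hᵀ H, and W ∈ ℂ^{m1×m2}. Define h(X,Y) = ½(‖XY−W‖_F² + ρ1‖HXY‖_F²), ∇_X h(X,Y) = (XY−W)Y* + ρ1 HᵀH X Y Y*, and ∇_Y h(X,Y) = X*(XY−W) + ρ1 X* HᵀH X Y. Then for all X, ΔX ∈ ℂ^{m1×r} and Y, ΔY ∈ ℂ^{r×m2}: (1) ‖∇_X h(X,Y) − ∇_X h(X+ΔX,Y)‖_F ≤ ‖H_{ρ1}‖_2 · ‖Y Y*‖_2 · ‖ΔX‖_F, and (2) ‖∇_Y h(X,Y) − ∇_Y h(X,Y+ΔY)‖_F ≤ ‖X* H_{ρ1}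 X‖_2 · ‖ΔY‖_F. -/
open Matrix Complex BigOperators
open scoped Matrix.Norms.L2Operator

noncomputable section

/-- Frobenius norm of a complex matrix. -/
def frobNorm {a b : ℕ} (M : Matrix (Fin a) (Fin b) ℂ) : ℝ :=
  Real.sqrt (frobSqC M)

/-- Spectral norm (largest singular value) of a complex matrix: the operator norm
of the induced map between Euclidean spaces. -/
def specNorm {a b : ℕ} (M : Matrix (Fin a) (Fin b) ℂ) : ℝ :=
  ‖LinearMap.toContinuousLinearMap (Matrix.toEuclideanLin M)‖

lemma frobSqC_nonneg {a b : ℕ} (M : Matrix (Fin a) (Fin b) ℂ) : 0 ≤ frobSqC M :=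
  Finset.sum_nonneg fun _ _ => Finset.sum_nonneg fun _ _ => sq_nonneg _

lemma frobNorm_nonneg {a b : ℕ} (M : Matrix (Fin a) (Fin b) ℂ) : 0 ≤ frobNorm M :=
  Real.sqrt_nonneg _

lemma specNorm_nonneg {a b : ℕ} (M : Matrix (Fin a) (Fin b) ℂ) : 0 ≤ specNorm M :=
  norm_nonneg _

lemma frobNorm_neg {a b : ℕ} (M : Matrix (Fin a) (Fin b) ℂ) : frobNorm (-M) = frobNorm M := by
  unfold frobNorm frobSqC; simp

lemma frobNorm_conjTranspose {a b : ℕ} (M : Matrix (Fin a) (Fin b) ℂ) :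
    frobNorm Mᴴ = frobNorm M := by
  unfold frobNorm frobSqC
  rw [Finset.sum_comm]
  simp [Matrix.conjTranspose_apply]

lemma specNorm_conjTranspose {a b : ℕ} (M : Matrix (Fin a) (Fin b) ℂ) :
    specNorm Mᴴ = specNorm M := by
  have h := Matrix.l2_opNorm_conjTranspose (𝕜 := ℂ) M
  simpa [Matrix.l2_opNorm_def, specNorm] using h

lemma frob_mul_le_left {a b c : ℕ} (A : Matrix (Fin a) (Fin b) ℂ)
    (B : Matrix (Fin b) (Fin c) ℂ) :
    frobNorm (A * B) ≤ specNorm A * frobNorm B := by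
  have key : frobSqC (A * B) ≤ (specNorm A) ^ 2 * frobSqC B := by
    unfold frobSqC
    rw [Finset.sum_comm, Finset.sum_comm (s := Finset.univ) (f := fun i j => ‖B i j‖ ^ 2)]
    rw [Finset.mul_sum]
    apply Finset.sum_le_sum
    intro j _
    set x : EuclideanSpace ℂ (Fin b) := (EuclideanSpace.equiv (Fin b) ℂ).symm (fun k => B k j)
    have hx : ‖x‖ ^ 2 = ∑ k, ‖B k j‖ ^ 2 := by
      rw [EuclideanSpace.norm_eq, Real.sq_sqrt (Finset.sum_nonneg fun _ _ => sq_nonneg _)]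
      simp [x]
    have hy := Matrix.l2_opNorm_mulVec A x
    have hyn : ‖(EuclideanSpace.equiv (Fin a) ℂ).symm (A *ᵥ x)‖ ^ 2
        = ∑ i, ‖(A * B) i j‖ ^ 2 := by
      rw [EuclideanSpace.norm_eq, Real.sq_sqrt (Finset.sum_nonneg fun _ _ => sq_nonneg _)]
      refine Finset.sum_congr rfl fun i _ => ?_
      simp [Matrix.mul_apply, Matrix.mulVec, dotProduct, x]
    calc ∑ i, ‖(A * B) i j‖ ^ 2
        = ‖(EuclideanSpace.equiv (Fin a) ℂ).symm (A *ᵥ x)‖ ^ 2 := hyn.symm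
      _ ≤ (‖A‖ * ‖x‖) ^ 2 := by
          have h1 : (0:ℝ) ≤ ‖(EuclideanSpace.equiv (Fin a) ℂ).symm (A *ᵥ x)‖ := norm_nonneg _
          nlinarith [norm_nonneg x, norm_nonneg A]
      _ = specNorm A ^ 2 * ∑ k, ‖B k j‖ ^ 2 := by
          rw [mul_pow, hx]; rfl
  unfold frobNorm
  calc Real.sqrt (frobSqC (A * B)) ≤ Real.sqrt (specNorm A ^ 2 * frobSqC B) :=
        Real.sqrt_le_sqrt key
    _ = specNorm A * Real.sqrt (frobSqC B) := by
        rw [Real.sqrt_mul (sq_nonneg _), Real.sqrt_sq (specNorm_nonneg A)]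

lemma frob_mul_le_right {a b c : ℕ} (B : Matrix (Fin a) (Fin b) ℂ)
    (A : Matrix (Fin b) (Fin c) ℂ) :
    frobNorm (B * A) ≤ specNorm A * frobNorm B := by
  calc frobNorm (B * A) = frobNorm ((B * A)ᴴ) := (frobNorm_conjTranspose _).symm
    _ = frobNorm (Aᴴ * Bᴴ) := by rw [Matrix.conjTranspose_mul]
    _ ≤ specNorm Aᴴ * frobNorm Bᴴ := frob_mul_le_left _ _
    _ = specNorm A * frobNorm B := by rw [specNorm_conjTranspose, frobNorm_conjTranspose]

/-- the partial gradients of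
`h(X,Y) = ½(‖XY−W‖_F² + ρ1‖HXY‖_F²)` are Lipschitz in each block. -/
theorem partial_gradients_lipschitz (m1 m2 r p : ℕ)
    (hm1 : 0 < m1) (hm2 : 0 < m2) (hr : 0 < r) (hp : 0 < p)
    (ρ1 : ℝ) (hρ1 : 0 ≤ ρ1)
    (H : Matrix (Fin p) (Fin m1) ℝ)
    (W : Matrix (Fin m1) (Fin m2) ℂ) :
    ∀ (X ΔX : Matrix (Fin m1) (Fin r) ℂ) (Y ΔY : Matrix (Fin r) (Fin m2) ℂ),
      (frobNorm
          (((X * Y - W) * Yᴴ + (ρ1 : ℂ) • (((Hᵀ * H).map Complex.ofReal) * X * Y * Yᴴ)) -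
            (((X + ΔX) * Y - W) * Yᴴ +
              (ρ1 : ℂ) • (((Hᵀ * H).map Complex.ofReal) * (X + ΔX) * Y * Yᴴ))) ≤
        specNorm ((1 : Matrix (Fin m1) (Fin m1) ℂ) +
            (ρ1 : ℂ) • ((Hᵀ * H).map Complex.ofReal)) *
          specNorm (Y * Yᴴ) * frobNorm ΔX) ∧
      (frobNorm
          ((Xᴴ * (X * Y - W) + (ρ1 : ℂ) • (Xᴴ * ((Hᵀ * H).map Complex.ofReal) * X * Y)) -
            (Xᴴ * (X * (Y + ΔY) - W) +
              (ρ1 : ℂ) • (Xᴴ * ((Hᵀ * H).map Complex.ofReal) * X * (Y + ΔY)))) ≤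
        specNorm (Xᴴ * ((1 : Matrix (Fin m1) (Fin m1) ℂ) +
            (ρ1 : ℂ) • ((Hᵀ * H).map Complex.ofReal)) * X) * frobNorm ΔY) := by
  intro X ΔX Y ΔY
  set K : Matrix (Fin m1) (Fin m1) ℂ := (Hᵀ * H).map Complex.ofReal with hK
  set L : Matrix (Fin m1) (Fin m1) ℂ := (1 : Matrix (Fin m1) (Fin m1) ℂ) + (ρ1 : ℂ) • K with hL
  constructor
  · have e1 : (((X * Y - W) * Yᴴ + (ρ1 : ℂ) • (K * X * Y * Yᴴ)) -
        (((X + ΔX) * Y - W) * Yᴴ + (ρ1 : ℂ) • (K * (X + ΔX) * Y * Yᴴ))) =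
        -(L * ΔX * (Y * Yᴴ)) := by
      rw [hL]
      simp only [sub_eq_add_neg, Matrix.add_mul, Matrix.mul_add, Matrix.neg_mul, Matrix.mul_neg,
        Matrix.smul_mul, Matrix.mul_smul, Matrix.mul_assoc, Matrix.one_mul, smul_add, smul_neg,
        neg_add]
      abel
    rw [e1, frobNorm_neg]
    calc frobNorm (L * ΔX * (Y * Yᴴ)) ≤ specNorm (Y * Yᴴ) * frobNorm (L * ΔX) :=
          frob_mul_le_right _ _
      _ ≤ specNorm (Y * Yᴴ) * (specNorm L * frobNorm ΔX) := by
          exact mul_le_mul_of_nonneg_left (frob_mul_le_left _ _) (specNorm_nonneg _)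
      _ = specNorm L * specNorm (Y * Yᴴ) * frobNorm ΔX := by ring
  · have e2 : ((Xᴴ * (X * Y - W) + (ρ1 : ℂ) • (Xᴴ * K * X * Y)) -
        (Xᴴ * (X * (Y + ΔY) - W) + (ρ1 : ℂ) • (Xᴴ * K * X * (Y + ΔY)))) =
        -((Xᴴ * L * X) * ΔY) := by
      rw [hL]
      simp only [sub_eq_add_neg, Matrix.add_mul, Matrix.mul_add, Matrix.neg_mul, Matrix.mul_neg,
        Matrix.smul_mul, Matrix.mul_smul, Matrix.mul_assoc, Matrix.one_mul, Matrix.mul_one,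
        smul_add, smul_neg, neg_add]
      abel
    rw [e2, frobNorm_neg]
    exact frob_mul_le_left _ _
end
end

section
/- Let m1, m2, m3, r be positive integers and let Ã_1, …, Ã_{m3} be complex m1×m2 matrices such that rank(Ã_k) ≤ r for all k, Ã_1 has real entries, and Ã_k equals the entrywise complex conjugate of Ã_{m3−k+2} for every k ∈ {2,…,m3}. Then there exist complex matrices X̃_1, …, X̃_{m3} ∈ ℂ^{m1×r} and Ỹ_1, …, Ỹ_{m3} ∈ ℂ^{r×m2} such that Ã_k = X̃_k Ỹ_k for all k, X̃_1 and Ỹ_1 have real entries, and X̃_k (resp. Ỹ_k) equals the entrywise complex conjugate of X̃_{m3−k+2} (resp. Ỹ_{m3−k+2}) for every k ∈ {2,…,m3}. -/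
open Matrix Complex BigOperators

noncomputable section

lemma factor_of_rank_le {K : Type*} [Field K] {m n r : ℕ}
    (A : Matrix (Fin m) (Fin n) K) (h : A.rank ≤ r) :
    ∃ (X : Matrix (Fin m) (Fin r) K) (Y : Matrix (Fin r) (Fin n) K), A = X * Y := by
  classical
  set W := LinearMap.range A.mulVecLin with hW
  set d := Module.finrank K W with hd
  have hdr : d ≤ r := h
  let b : Module.Basis (Fin d) K W := Module.finBasis K W
  have hcol : ∀ j : Fin n, A.mulVec (Pi.single j 1) ∈ W := fun j => ⟨Pi.single j 1, rfl⟩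
  let c : Fin n → (Fin d →₀ K) := fun j => b.repr ⟨A.mulVec (Pi.single j 1), hcol j⟩
  refine ⟨Matrix.of fun i t => if h : (t : ℕ) < d then ((b ⟨t, h⟩ : Fin m → K) i) else 0,
          Matrix.of fun t j => if h : (t : ℕ) < d then c j ⟨t, h⟩ else 0, ?_⟩
  ext i j
  rw [Matrix.mul_apply]
  set F : ℕ → K := fun t => if h : t < d then ((b ⟨t, h⟩ : Fin m → K) i) * c j ⟨t, h⟩ else 0
    with hF
  have key : (∑ t : Fin r, F t) = ∑ s : Fin d, F s := by
    rw [Fin.sum_univ_eq_sum_range, Fin.sum_univ_eq_sum_range]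
    refine (Finset.sum_subset (Finset.range_subset_range.mpr hdr) ?_).symm
    intro x _ hx
    exact dif_neg (by simpa using hx)
  symm
  calc (∑ t : Fin r, Matrix.of (fun i t => if h : (t : ℕ) < d then ((b ⟨t, h⟩ : Fin m → K) i) else 0) i t *
          Matrix.of (fun t j => if h : (t : ℕ) < d then c j ⟨t, h⟩ else 0) t j)
      = ∑ t : Fin r, F (t : ℕ) := by
        refine Finset.sum_congr rfl fun t _ => ?_
        simp only [Matrix.of_apply, hF]
        split <;> simp
    _ = ∑ s : Fin d, F (s : ℕ) := key
    _ = ∑ s : Fin d, c j s • ((b s : Fin m → K) i) := by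
        refine Finset.sum_congr rfl fun s _ => ?_
        simp only [hF, dif_pos s.isLt, Fin.eta, smul_eq_mul]
        ring
    _ = A i j := by
        have hrepr : ((⟨A.mulVec (Pi.single j 1), hcol j⟩ : W) : Fin m → K)
            = ∑ s : Fin d, c j s • (b s : Fin m → K) := by
          conv_lhs => rw [← b.sum_repr ⟨A.mulVec (Pi.single j 1), hcol j⟩]
          push_cast
          rfl
        have h2 : A.mulVec (Pi.single j 1) i = A i j := by simp
        rw [← h2]
        have := congrFun hrepr i
        rw [show ((⟨A.mulVec (Pi.single j 1), hcol j⟩ : W) : Fin m → K) i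
            = A.mulVec (Pi.single j 1) i from rfl] at this
        rw [this, Finset.sum_apply]
        rfl

lemma real_rank_le {m n r : ℕ} (A : Matrix (Fin m) (Fin n) ℂ) (h : A.rank ≤ r)
    (hre : ∀ i j, (A i j).im = 0) :
    (Matrix.of fun i j => (A i j).re : Matrix (Fin m) (Fin n) ℝ).rank ≤ r := by
  classical
  set R : Matrix (Fin m) (Fin n) ℝ := Matrix.of fun i j => (A i j).re with hR
  have hmap : A = R.map (fun x : ℝ => (x : ℂ)) := by
    ext i j
    refine Complex.ext ?_ ?_ <;> simp [hR, Matrix.map_apply, hre i j]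
  set WR := LinearMap.range R.mulVecLin with hWR
  set d := Module.finrank ℝ WR with hd
  show d ≤ r
  let b : Module.Basis (Fin d) ℝ WR := Module.finBasis ℝ WR
  let w : Fin d → (Fin m → ℝ) := fun s => (b s : Fin m → ℝ)
  have hwli : LinearIndependent ℝ w :=
    b.linearIndependent.map' WR.subtype WR.ker_subtype
  let Wc : Fin d → (Fin m → ℂ) := fun s x => ((w s x : ℝ) : ℂ)
  have hWmem : ∀ s, Wc s ∈ LinearMap.range A.mulVecLin := by
    intro s
    obtain ⟨v, hv⟩ := (b s).2
    refine ⟨fun t => ((v t : ℝ) : ℂ), ?_⟩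
    have hv' : R *ᵥ v = w s := by rw [← Matrix.mulVecLin_apply, hv]
    funext x
    simp only [Matrix.mulVecLin_apply]
    calc A.mulVec (fun t => ((v t : ℝ) : ℂ)) x
        = ∑ t, ((R x t : ℝ) : ℂ) * ((v t : ℝ) : ℂ) := by
          simp [Matrix.mulVec, dotProduct, hmap, Matrix.map_apply]
      _ = (((∑ t, R x t * v t : ℝ)) : ℂ) := by push_cast; ring
      _ = Wc s x := by
          rw [show (∑ t, R x t * v t) = (R *ᵥ v) x from rfl, hv']
  have hWli : LinearIndependent ℂ Wc := by
    rw [Fintype.linearIndependent_iff]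
    intro g hg
    have hcomp : ∀ x, (∑ s, g s * ((w s x : ℝ) : ℂ)) = 0 := by
      intro x
      have := congrFun hg x
      simpa [Wc, Finset.sum_apply] using this
    have hre0 : ∀ s, (g s).re = 0 := by
      have hx : ∀ x, (∑ s, (g s).re * w s x) = 0 := by
        intro x
        have := congrArg Complex.re (hcomp x)
        simpa using this
      have hdep : (∑ s, (g s).re • w s) = 0 := by
        funext x
        simpa [Finset.sum_apply] using hx x
      exact Fintype.linearIndependent_iff.mp hwli _ hdep
    have him0 : ∀ s, (g s).im = 0 := by
      have hx : ∀ x, (∑ s, (g s).im * w s x) = 0 := by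
        intro x
        have := congrArg Complex.im (hcomp x)
        simpa using this
      have hdep : (∑ s, (g s).im • w s) = 0 := by
        funext x
        simpa [Finset.sum_apply] using hx x
      exact Fintype.linearIndependent_iff.mp hwli _ hdep
    intro s
    exact Complex.ext (hre0 s) (him0 s)
  let Wc' : Fin d → (LinearMap.range A.mulVecLin) := fun s => ⟨Wc s, hWmem s⟩
  have hWli' : LinearIndependent ℂ Wc' :=
    hWli.of_comp (LinearMap.range A.mulVecLin).subtype
  have := hWli'.fintype_card_le_finrank
  simpa using this.trans h

lemma real_factor {m n r : ℕ} (A : Matrix (Fin m) (Fin n) ℂ) (h : A.rank ≤ r)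
    (hre : ∀ i j, (A i j).im = 0) :
    ∃ (X : Matrix (Fin m) (Fin r) ℂ) (Y : Matrix (Fin r) (Fin n) ℂ),
      A = X * Y ∧ (∀ i j, (X i j).im = 0) ∧ (∀ i j, (Y i j).im = 0) := by
  obtain ⟨X0, Y0, hXY⟩ := factor_of_rank_le _ (real_rank_le A h hre)
  refine ⟨X0.map Complex.ofRealHom, Y0.map Complex.ofRealHom, ?_, ?_, ?_⟩
  · have : A = (Matrix.of fun i j => (A i j).re : Matrix (Fin m) (Fin n) ℝ).map Complex.ofRealHom := by
      ext i j
      refine Complex.ext ?_ ?_ <;> simp [Matrix.map_apply, hre i j]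
    rw [this, hXY, Matrix.map_mul]
  · intro i j; simp [Matrix.map_apply]
  · intro i j; simp [Matrix.map_apply]

/-- a conjugate-symmetric family of complex matrices of rank at most `r`
admits a slice-wise rank-`r` factorization which is itself conjugate-symmetric
(the slice-wise form of the t-product factorization of a tensor of tubal rank ≤ r). -/
theorem conj_symmetric_low_rank_factorization (m1 m2 m3 r : ℕ)
    (hm1 : 0 < m1) (hm2 : 0 < m2) (hm3 : 0 < m3) (hr : 0 < r)
    (tA : Fin m3 → Matrix (Fin m1) (Fin m2) ℂ)
    (hrank : ∀ k, (tA k).rank ≤ r)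
    (hreal : ∀ (i : Fin m1) (j : Fin m2), (tA ⟨0, hm3⟩ i j).im = 0)
    (hconj : ∀ k : Fin m3, k ≠ ⟨0, hm3⟩ → tA k = (tA (-k)).map (starRingEnd ℂ)) :
    ∃ (tX : Fin m3 → Matrix (Fin m1) (Fin r) ℂ)
      (tY : Fin m3 → Matrix (Fin r) (Fin m2) ℂ),
      (∀ k, tA k = tX k * tY k) ∧
      (∀ (i : Fin m1) (j : Fin r), (tX ⟨0, hm3⟩ i j).im = 0) ∧
      (∀ (i : Fin r) (j : Fin m2), (tY ⟨0, hm3⟩ i j).im = 0) ∧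
      (∀ k : Fin m3, k ≠ ⟨0, hm3⟩ → tX k = (tX (-k)).map (starRingEnd ℂ)) ∧
      (∀ k : Fin m3, k ≠ ⟨0, hm3⟩ → tY k = (tY (-k)).map (starRingEnd ℂ)) := by
  classical
  haveI : NeZero m3 := ⟨hm3.ne'⟩
  have negval : ∀ k : Fin m3, k ≠ ⟨0, hm3⟩ → ((-k : Fin m3) : ℕ) = m3 - (k : ℕ) := by
    intro k hk
    have hkpos : 0 < (k : ℕ) := Nat.pos_of_ne_zero (fun h => hk (Fin.ext h))
    rw [Fin.coe_neg]
    exact Nat.mod_eq_of_lt (by omega)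
  have hconjconj : ∀ {p q : ℕ} (M : Matrix (Fin p) (Fin q) ℂ),
      (M.map (starRingEnd ℂ)).map (starRingEnd ℂ) = M := by
    intro p q M; ext i j; simp [Matrix.map_apply]
  have hmapreal : ∀ {p q : ℕ} (M : Matrix (Fin p) (Fin q) ℂ),
      (∀ i j, (M i j).im = 0) → M.map (starRingEnd ℂ) = M := by
    intro p q M h; ext i j
    exact Complex.conj_eq_iff_im.mpr (h i j)
  have hfac : ∀ A : Matrix (Fin m1) (Fin m2) ℂ, ∃ (X : Matrix (Fin m1) (Fin r) ℂ)
      (Y : Matrix (Fin r) (Fin m2) ℂ),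
      (A.rank ≤ r → A = X * Y) ∧
      (A.rank ≤ r → (∀ i j, (A i j).im = 0) →
        (∀ i j, (X i j).im = 0) ∧ (∀ i j, (Y i j).im = 0)) := by
    intro A
    by_cases hA : A.rank ≤ r
    · by_cases hAre : ∀ i j, (A i j).im = 0
      · obtain ⟨X, Y, h1, h2, h3⟩ := real_factor A hA hAre
        exact ⟨X, Y, fun _ => h1, fun _ _ => ⟨h2, h3⟩⟩
      · obtain ⟨X, Y, h1⟩ := factor_of_rank_le A hA
        exact ⟨X, Y, fun _ => h1, fun _ h => absurd h hAre⟩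
    · exact ⟨0, 0, fun h => absurd h hA, fun h _ => absurd h hA⟩
  choose FX FY hmul hreXY using hfac
  set P : Fin m3 → Prop := fun k => ∀ i j, (tA k i j).im = 0 with hP
  have hPz : P ⟨0, hm3⟩ := hreal
  have hAc' : ∀ k : Fin m3, k ≠ ⟨0, hm3⟩ → tA (-k) = (tA k).map (starRingEnd ℂ) := by
    intro k hk
    rw [hconj k hk, hconjconj]
  have hkz_of_notP : ∀ k : Fin m3, ¬ P k → k ≠ ⟨0, hm3⟩ := by
    intro k hPk e
    exact hPk (by rw [e]; exact hPz)
  have hPneg : ∀ k : Fin m3, k ≠ ⟨0, hm3⟩ → P k → (tA (-k) = tA k ∧ P (-k)) := by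
    intro k hk hPk
    have he : tA (-k) = tA k := by
      rw [hAc' k hk]; exact hmapreal _ hPk
    exact ⟨he, fun i j => by rw [he]; exact hPk i j⟩
  have hPneg' : ∀ k : Fin m3, ¬ P k → ¬ P (-k) := by
    intro k hPk hp
    refine hPk (fun i j => ?_)
    rw [hconj k (hkz_of_notP k hPk)]
    simp [Matrix.map_apply, hp i j]
  have hne2 : ∀ k : Fin m3, ¬ P k → 2 * (k : ℕ) ≠ m3 := by
    intro k hPk he
    have hk := hkz_of_notP k hPk
    have hnk : -k = k := by
      apply Fin.ext
      rw [negval k hk]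
      omega
    refine hPk (fun i j => ?_)
    have h1 := hconj k hk
    rw [hnk] at h1
    have h2 := congrFun (congrFun h1 i) j
    rw [Matrix.map_apply] at h2
    exact Complex.conj_eq_iff_im.mp h2.symm
  refine ⟨fun k => if P k then FX (tA k)
      else if 2 * (k : ℕ) < m3 then FX (tA k) else (FX (tA (-k))).map (starRingEnd ℂ),
    fun k => if P k then FY (tA k)
      else if 2 * (k : ℕ) < m3 then FY (tA k) else (FY (tA (-k))).map (starRingEnd ℂ),
    ?_, ?_, ?_, ?_, ?_⟩
  · -- product
    intro k
    dsimp only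
    by_cases hPk : P k
    · rw [if_pos hPk, if_pos hPk]; exact hmul (tA k) (hrank k)
    · rw [if_neg hPk, if_neg hPk]
      by_cases h2 : 2 * (k : ℕ) < m3
      · rw [if_pos h2, if_pos h2]; exact hmul _ (hrank k)
      · rw [if_neg h2, if_neg h2, ← Matrix.map_mul, ← hmul _ (hrank (-k))]
        exact hconj k (hkz_of_notP k hPk)
  · -- X real at 0
    dsimp only
    rw [if_pos hPz]
    exact (hreXY _ (hrank _) hPz).1
  · dsimp only
    rw [if_pos hPz]
    exact (hreXY _ (hrank _) hPz).2
  · -- X symmetry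
    intro k hk
    dsimp only
    by_cases hPk : P k
    · obtain ⟨he, hPn⟩ := hPneg k hk hPk
      rw [if_pos hPk, if_pos hPn, he, hmapreal _ (hreXY _ (hrank k) hPk).1]
    · have hPn := hPneg' k hPk
      have hnz : 2 * (k : ℕ) ≠ m3 := hne2 k hPk
      have hnv := negval k hk
      rw [if_neg hPk, if_neg hPn]
      rcases lt_trichotomy (2 * (k : ℕ)) m3 with hlt | heq | hgt
      · rw [if_pos hlt, if_neg (by omega : ¬ 2 * ((-k : Fin m3) : ℕ) < m3), neg_neg,
          hconjconj]
      · exact absurd heq hnz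
      · rw [if_neg (by omega : ¬ 2 * (k : ℕ) < m3),
          if_pos (by omega : 2 * ((-k : Fin m3) : ℕ) < m3)]
  · -- Y symmetry
    intro k hk
    dsimp only
    by_cases hPk : P k
    · obtain ⟨he, hPn⟩ := hPneg k hk hPk
      rw [if_pos hPk, if_pos hPn, he, hmapreal _ (hreXY _ (hrank k) hPk).2]
    · have hPn := hPneg' k hPk
      have hnz : 2 * (k : ℕ) ≠ m3 := hne2 k hPk
      have hnv := negval k hk
      rw [if_neg hPk, if_neg hPn]
      rcases lt_trichotomy (2 * (k : ℕ)) m3 with hlt | heq | hgt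
      · rw [if_pos hlt, if_neg (by omega : ¬ 2 * ((-k : Fin m3) : ℕ) < m3), neg_neg,
          hconjconj]
      · exact absurd heq hnz
      · rw [if_neg (by omega : ¬ 2 * (k : ℕ) < m3),
          if_pos (by omega : 2 * ((-k : Fin m3) : ℕ) < m3)]
end
end
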